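/- arXiv:1809.01695 — 3 statements merged into one kernel-verified Lean document; each statement's English description precedes it below -/
import Mathlib

section
/- Let B be a bounded selfadjoint operator on a complex Hilbert space H, S a closed subspace of H, and S = S+ ⊕_B S− any decomposition. Then the following are equivalent: (i) B is S-complementable; (ii) B is S+-complementable and S−-complementable; (iii) B is S-weakly complementable, the Schur complement B_{/S+} is S−-complementable, and the Schur complement B_{/S−} is S+-complementable. In this case there exists Q ∈ P(B,S) which decomposes as Q = Q+ + Q− with Q+ ∈ P(B,S+), Q− ∈ P(B,S−), range(Q+) orthogonal to range(Q−), and Q+Q− = Q−Q+ = 0. -/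
open ContinuousLinearMap

noncomputable section

variable {H : Type*} [NormedAddCommGroup H] [InnerProductSpace ℂ H] [CompleteSpace H]

/-- The orthogonal projection onto a closed subspace `S`, as an endomorphism of `H`. -/
def projL (S : Submodule ℂ H) [S.HasOrthogonalProjection] : H →L[ℂ] H :=
  S.subtypeL.comp S.orthogonalProjectionOnto

/-- The corner `a = P_S B P_S` of the block decomposition of `B` w.r.t. `H = S ⊕ Sᗮ`. -/
def blockA (B : H →L[ℂ] H) (S : Submodule ℂ H) [S.HasOrthogonalProjection] : H →L[ℂ] H :=
  projL S * B * projL S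

/-- The corner `b = P_S B P_{Sᗮ}` of the block decomposition of `B` w.r.t. `H = S ⊕ Sᗮ`. -/
def blockB (B : H →L[ℂ] H) (S : Submodule ℂ H) [S.HasOrthogonalProjection] : H →L[ℂ] H :=
  projL S * B * (1 - projL S)

/-- The corner `c = P_{Sᗮ} B P_{Sᗮ}` of the block decomposition of `B` w.r.t. `H = S ⊕ Sᗮ`. -/
def blockC (B : H →L[ℂ] H) (S : Submodule ℂ H) [S.HasOrthogonalProjection] : H →L[ℂ] H :=
  (1 - projL S) * B * (1 - projL S)

/-- `m = |a|^{1/2}`: `m` is the (unique) positive fourth root of `a⋆ a`. -/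
def IsSqrtAbs (a m : H →L[ℂ] H) : Prop :=
  m.IsPositive ∧ m ^ 4 = adjoint a * a

/-- `B` is `S`-weakly complementable: `range b ⊆ range |a|^{1/2}`. -/
def IsWeaklyComplementable (B : H →L[ℂ] H) (S : Submodule ℂ H)
    [S.HasOrthogonalProjection] : Prop :=
  ∃ m : H →L[ℂ] H, IsSqrtAbs (blockA B S) m ∧
    LinearMap.range (blockB B S : H →ₗ[ℂ] H) ≤ LinearMap.range (m : H →ₗ[ℂ] H)

/-- `B` is `S`-complementable: `H = S + B⁻¹(Sᗮ)`. -/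
def IsComplementable (B : H →L[ℂ] H) (S : Submodule ℂ H) : Prop :=
  S ⊔ Sᗮ.comap (B : H →ₗ[ℂ] H) = ⊤

/-- The set `P(B,S)` of `B`-selfadjoint bounded idempotents onto `S`. -/
def projSet (B : H →L[ℂ] H) (S : Submodule ℂ H) : Set (H →L[ℂ] H) :=
  {Q | Q * Q = Q ∧ LinearMap.range (Q : H →ₗ[ℂ] H) = S ∧ B * Q = adjoint Q * B}

/-- `Y` is the Schur complement `B_{/S} = [[0,0],[0, c - f⋆ u f]]`, where `f` is the reduced
solution of `b = |a|^{1/2} x` and `a = u |a|` is the polar decomposition of `a`. -/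
def IsSchur (B : H →L[ℂ] H) (S : Submodule ℂ H) [S.HasOrthogonalProjection]
    (Y : H →L[ℂ] H) : Prop :=
  ∃ m u f : H →L[ℂ] H,
    IsSqrtAbs (blockA B S) m ∧
    LinearMap.ker (u : H →ₗ[ℂ] H) = LinearMap.ker (blockA B S : H →ₗ[ℂ] H) ∧
    (∀ x ∈ (LinearMap.ker (blockA B S : H →ₗ[ℂ] H))ᗮ, ‖u x‖ = ‖x‖) ∧
    blockA B S = u * m ^ 2 ∧
    m * f = blockB B S ∧
    LinearMap.range (f : H →ₗ[ℂ] H) ≤ (LinearMap.range (m : H →ₗ[ℂ] H)).topologicalClosure ∧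
    Y = blockC B S - adjoint f * (u * f)

/-- The set `M⁻(B,T)`. -/
def Mminus (B : H →L[ℂ] H) (T : Submodule ℂ H) : Set (H →L[ℂ] H) :=
  {X | IsSelfAdjoint X ∧ (B - X).IsPositive ∧ LinearMap.range (X : H →ₗ[ℂ] H) ≤ T}

/-- The set `M⁺(B,T)`. -/
def Mplus (B : H →L[ℂ] H) (T : Submodule ℂ H) : Set (H →L[ℂ] H) :=
  {X | IsSelfAdjoint X ∧ (X - B).IsPositive ∧ LinearMap.range (X : H →ₗ[ℂ] H) ≤ T}

/-- `Y` is the Loewner maximum of `M`. -/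
def IsMaxOf (M : Set (H →L[ℂ] H)) (Y : H →L[ℂ] H) : Prop :=
  Y ∈ M ∧ ∀ X ∈ M, (Y - X).IsPositive

/-- `Z` is the Loewner minimum of `M`. -/
def IsMinOf (M : Set (H →L[ℂ] H)) (Z : H →L[ℂ] H) : Prop :=
  Z ∈ M ∧ ∀ X ∈ M, (X - Z).IsPositive

/-- `Z` is the greatest lower bound of `M` in the Loewner order on selfadjoint operators. -/
def IsGLBOf (M : Set (H →L[ℂ] H)) (Z : H →L[ℂ] H) : Prop :=
  IsSelfAdjoint Z ∧ (∀ X ∈ M, (X - Z).IsPositive) ∧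
    ∀ F : H →L[ℂ] H, IsSelfAdjoint F → (∀ X ∈ M, (X - F).IsPositive) → (Z - F).IsPositive

/-- `Y` is the least upper bound of `M` in the Loewner order on selfadjoint operators. -/
def IsLUBOf (M : Set (H →L[ℂ] H)) (Y : H →L[ℂ] H) : Prop :=
  IsSelfAdjoint Y ∧ (∀ X ∈ M, (Y - X).IsPositive) ∧
    ∀ F : H →L[ℂ] H, IsSelfAdjoint F → (∀ X ∈ M, (F - X).IsPositive) → (F - Y).IsPositive

/-- A decomposition `S = S₊ ⊕_B S₋` into a `B`-nonnegative and a `B`-nonpositive part. -/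
def IsWDecomp (B : H →L[ℂ] H) (S Sp Sm : Submodule ℂ H) : Prop :=
  (∀ x ∈ Sp, ∀ y ∈ Sm, (inner ℂ x y : ℂ) = 0) ∧
  Sp ⊔ Sm = S ∧
  (∀ x ∈ Sp, 0 ≤ (inner ℂ (B x) x : ℂ).re) ∧
  (∀ x ∈ Sm, (inner ℂ (B x) x : ℂ).re ≤ 0) ∧
  (∀ x ∈ Sp, ∀ y ∈ Sm, (inner ℂ (B x) y : ℂ) = 0)

/-- `Y` is Krein's shorted operator `B_{/T}` of the positive operator `B` to `T`:
the Loewner maximum of `{X : 0 ≤ X ≤ B, range X ⊆ Tᗮ}`. -/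
def IsShort (B : H →L[ℂ] H) (T : Submodule ℂ H) (Y : H →L[ℂ] H) : Prop :=
  (Y.IsPositive ∧ (B - Y).IsPositive ∧ LinearMap.range (Y : H →ₗ[ℂ] H) ≤ Tᗮ) ∧
    ∀ X : H →L[ℂ] H, X.IsPositive → (B - X).IsPositive → LinearMap.range (X : H →ₗ[ℂ] H) ≤ Tᗮ →
      (Y - X).IsPositive

/-- The set `{R⋆ Q⋆ B Q R : Q² = Q, N(Q) = T}`. -/
def comprSet2 (B R : H →L[ℂ] H) (T : Submodule ℂ H) : Set (H →L[ℂ] H) :=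
  {X | ∃ Q : H →L[ℂ] H, Q * Q = Q ∧ LinearMap.ker (Q : H →ₗ[ℂ] H) = T ∧
    X = adjoint R * (adjoint Q * B * Q) * R}

/-- The set `{Q⋆ B Q : Q² = Q, N(Q) = S}`. -/
def comprSet1 (B : H →L[ℂ] H) (S : Submodule ℂ H) : Set (H →L[ℂ] H) :=
  {X | ∃ Q : H →L[ℂ] H, Q * Q = Q ∧ LinearMap.ker (Q : H →ₗ[ℂ] H) = S ∧ X = adjoint Q * B * Q}

/-- The set `N⁻(W,T)` of the Krein space `(H, [x,y] = ⟨Jx,y⟩)`. -/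
def Nminus (J W : H →L[ℂ] H) (T : Submodule ℂ H) : Set (H →L[ℂ] H) :=
  {X | IsSelfAdjoint (J * X) ∧ (J * (W - X)).IsPositive ∧ LinearMap.range (X : H →ₗ[ℂ] H) ≤ T}

/-- The set `N⁺(W,T)` of the Krein space `(H, [x,y] = ⟨Jx,y⟩)`. -/
def Nplus (J W : H →L[ℂ] H) (T : Submodule ℂ H) : Set (H →L[ℂ] H) :=
  {X | IsSelfAdjoint (J * X) ∧ (J * (X - W)).IsPositive ∧ LinearMap.range (X : H →ₗ[ℂ] H) ≤ T}

/-- `Y` is the maximum of `M` in the Krein order induced by `J`. -/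
def KMaxOf (J : H →L[ℂ] H) (M : Set (H →L[ℂ] H)) (Y : H →L[ℂ] H) : Prop :=
  Y ∈ M ∧ ∀ X ∈ M, (J * (Y - X)).IsPositive

/-- `Z` is the minimum of `M` in the Krein order induced by `J`. -/
def KMinOf (J : H →L[ℂ] H) (M : Set (H →L[ℂ] H)) (Z : H →L[ℂ] H) : Prop :=
  Z ∈ M ∧ ∀ X ∈ M, (J * (X - Z)).IsPositive

/-- `E` is a densely defined projection (idempotent) with kernel `N`. -/
def IsDDProj (N : Submodule ℂ H) (E : H →ₗ.[ℂ] H) : Prop :=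
  Dense (E.domain : Set H) ∧
  (∃ h : ∀ x : E.domain, E x ∈ E.domain, ∀ x : E.domain, E ⟨E x, h x⟩ = E x) ∧
  (LinearMap.ker E.toFun).map E.domain.subtype = N

/-- `G` is the (everywhere defined, bounded) composition `E ∘ T`; in particular
`range T ⊆ dom E`. -/
def IsBddComp (E : H →ₗ.[ℂ] H) (T G : H →L[ℂ] H) : Prop :=
  ∃ h : ∀ x : H, T x ∈ E.domain, ∀ x : H, G x = E ⟨T x, h x⟩


/-! ### Auxiliary lemmas -/

namespace StmtAux

open Filter Topology

variable {S T U : Submodule ℂ H}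

lemma projL_mem (S : Submodule ℂ H) [S.HasOrthogonalProjection] (x : H) : projL S x ∈ S :=
  (S.orthogonalProjectionOnto x).2

lemma projL_eq_self [S.HasOrthogonalProjection] {x : H} (hx : x ∈ S) : projL S x = x := by
  exact Submodule.starProjection_eq_self_iff.mpr hx

lemma projL_eq_zero [S.HasOrthogonalProjection] {x : H} (hx : x ∈ Sᗮ) : projL S x = 0 := by
  simp [projL, Submodule.orthogonalProjectionOnto_apply_of_mem_orthogonal hx]

lemma sub_projL_mem [S.HasOrthogonalProjection] (x : H) : x - projL S x ∈ Sᗮ :=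
  Submodule.sub_starProjection_mem_orthogonal x

lemma projL_eq_zero_iff [S.HasOrthogonalProjection] {x : H} : projL S x = 0 ↔ x ∈ Sᗮ := by
  refine ⟨fun h => ?_, projL_eq_zero⟩
  have := sub_projL_mem (S := S) x
  rwa [h, sub_zero] at this

lemma projL_sa (S : Submodule ℂ H) [S.HasOrthogonalProjection] [CompleteSpace S] :
    IsSelfAdjoint (projL S) :=
  isSelfAdjoint_starProjection S

lemma star_projL (S : Submodule ℂ H) [S.HasOrthogonalProjection] [CompleteSpace S] :
    star (projL S) = projL S := (projL_sa S).star_eq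

lemma projL_comp_of_range_le [U.HasOrthogonalProjection] {T : H →L[ℂ] H}
    (h : LinearMap.range (T : H →ₗ[ℂ] H) ≤ U) : projL U * T = T := by
  ext x
  exact projL_eq_self (h (LinearMap.mem_range_self (T : H →ₗ[ℂ] H) x))

lemma projL_comp_eq_zero [U.HasOrthogonalProjection] {T : H →L[ℂ] H}
    (h : LinearMap.range (T : H →ₗ[ℂ] H) ≤ Uᗮ) : projL U * T = 0 := by
  ext x
  exact projL_eq_zero (h (LinearMap.mem_range_self (T : H →ₗ[ℂ] H) x))

lemma range_projL (S : Submodule ℂ H) [S.HasOrthogonalProjection] :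
    LinearMap.range ((projL S) : H →ₗ[ℂ] H) = S := by
  apply le_antisymm
  · rintro _ ⟨x, rfl⟩; exact projL_mem S x
  · intro x hx; exact ⟨x, projL_eq_self hx⟩

lemma projL_idem (S : Submodule ℂ H) [S.HasOrthogonalProjection] :
    projL S * projL S = projL S :=
  projL_comp_of_range_le (by rw [range_projL])

lemma projL_comp_projL_of_le [S.HasOrthogonalProjection] [T.HasOrthogonalProjection]
    [CompleteSpace S] [CompleteSpace T] (h : T ≤ S) :
    projL S * projL T = projL T ∧ projL T * projL S = projL T := by
  have h1 : projL S * projL T = projL T :=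
    projL_comp_of_range_le (by rw [range_projL]; exact h)
  refine ⟨h1, ?_⟩
  calc projL T * projL S = star (star (projL S) * star (projL T)) := by simp [star_mul]
  _ = star (projL S * projL T) := by rw [star_projL, star_projL]
  _ = projL T := by rw [h1, star_projL]

lemma sa_inner_shift {m : H →L[ℂ] H} (hm : IsSelfAdjoint m) (x y : H) :
    (inner ℂ (m x) y : ℂ) = inner ℂ x (m y) := by
  conv_lhs => rw [show m x = (ContinuousLinearMap.adjoint m) x by
    rw [← star_eq_adjoint, hm.star_eq]]
  rw [adjoint_inner_left]

lemma sa_ker_sq {m : H →L[ℂ] H} (hm : IsSelfAdjoint m) {x : H} (h : m (m x) = 0) : m x = 0 := by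
  have h1 : (inner ℂ (m x) (m x) : ℂ) = 0 := by
    have h2 := sa_inner_shift hm (m x) x
    rw [h] at h2
    simpa using h2.symm
  exact inner_self_eq_zero.mp h1

lemma sa_ker_eq_orth_range {m : H →L[ℂ] H} (hm : IsSelfAdjoint m) :
    LinearMap.ker (m : H →ₗ[ℂ] H) = (LinearMap.range (m : H →ₗ[ℂ] H))ᗮ := by
  ext x
  constructor
  · intro hx
    rw [Submodule.mem_orthogonal]
    rintro _ ⟨y, rfl⟩
    rw [LinearMap.mem_ker] at hx
    rw [ContinuousLinearMap.coe_coe] at hx ⊢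
    rw [sa_inner_shift hm y x, hx, inner_zero_right]
  · intro hx
    rw [LinearMap.mem_ker]
    have h1 : (inner ℂ (m (m x)) x : ℂ) = 0 :=
      (Submodule.mem_orthogonal _ x).mp hx _ (LinearMap.mem_range_self (m : H →ₗ[ℂ] H) (m x))
    rw [sa_inner_shift hm (m x) x] at h1
    exact inner_self_eq_zero.mp h1

lemma sa_orth_ker {m : H →L[ℂ] H} (hm : IsSelfAdjoint m) :
    (LinearMap.ker (m : H →ₗ[ℂ] H))ᗮ = (LinearMap.range (m : H →ₗ[ℂ] H)).topologicalClosure := by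
  rw [sa_ker_eq_orth_range hm, Submodule.orthogonal_orthogonal_eq_closure]

lemma sa_range_le_orth_ker {m : H →L[ℂ] H} (hm : IsSelfAdjoint m) :
    LinearMap.range (m : H →ₗ[ℂ] H) ≤ (LinearMap.ker (m : H →ₗ[ℂ] H))ᗮ := by
  rw [sa_orth_ker hm]
  exact Submodule.le_topologicalClosure _

lemma ker_projL (K : Submodule ℂ H) [K.HasOrthogonalProjection] :
    LinearMap.ker ((projL K) : H →ₗ[ℂ] H) = Kᗮ := by
  ext x
  rw [LinearMap.mem_ker]
  exact projL_eq_zero_iff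

lemma reduced_eq_zero {m f : H →L[ℂ] H} (hm : IsSelfAdjoint m)
    (hf : LinearMap.range (f : H →ₗ[ℂ] H) ≤ (LinearMap.range (m : H →ₗ[ℂ] H)).topologicalClosure)
    (h : m * f = 0) : f = 0 := by
  rw [← sa_orth_ker hm] at hf
  ext x
  have h1 : f x ∈ LinearMap.ker (m : H →ₗ[ℂ] H) := by
    rw [LinearMap.mem_ker]
    have := congrArg (fun T : H →L[ℂ] H => T x) h
    simpa using this
  have h2 : f x ∈ (LinearMap.ker (m : H →ₗ[ℂ] H))ᗮ := hf (LinearMap.mem_range_self (f : H →ₗ[ℂ] H) x)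
  have hb : f x ∈ (⊥ : Submodule ℂ H) :=
    (Submodule.orthogonal_disjoint (LinearMap.ker (m : H →ₗ[ℂ] H))).le_bot ⟨h1, h2⟩
  simpa using (Submodule.mem_bot ℂ).mp hb

lemma range_mul_le (X Y : H →L[ℂ] H) : LinearMap.range ((X * Y) : H →ₗ[ℂ] H) ≤ LinearMap.range (X : H →ₗ[ℂ] H) := by
  rintro _ ⟨x, rfl⟩; exact ⟨Y x, rfl⟩

/-- A Douglas-type lemma: a range inclusion yields a bounded (reduced) solution. -/
lemma douglas (a b : H →L[ℂ] H) (h : LinearMap.range (b : H →ₗ[ℂ] H) ≤ LinearMap.range (a : H →ₗ[ℂ] H)) :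
    ∃ s : H →L[ℂ] H, a * s = b ∧ LinearMap.range (s : H →ₗ[ℂ] H) ≤ (LinearMap.ker (a : H →ₗ[ℂ] H))ᗮ := by
  set K := (LinearMap.ker (a : H →ₗ[ℂ] H))ᗮ with hK
  have hker : Kᗮ = LinearMap.ker (a : H →ₗ[ℂ] H) := Submodule.orthogonal_orthogonal _
  have key : ∀ x : H, a (projL K x) = a x := by
    intro x
    have h1 : x - projL K x ∈ Kᗮ := Submodule.sub_starProjection_mem_orthogonal x
    rw [hker, LinearMap.mem_ker, map_sub, sub_eq_zero] at h1
    exact h1.symm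
  have hch : ∀ y : H, ∃ x : H, a x = b y := fun y => h (LinearMap.mem_range_self (b : H →ₗ[ℂ] H) y)
  classical
  let c : H → H := fun y => (hch y).choose
  have hc : ∀ y, a (c y) = b y := fun y => (hch y).choose_spec
  have wd : ∀ x x' : H, a x = a x' → projL K x = projL K x' := by
    intro x x' hxx
    have hm : x - x' ∈ Kᗮ := by
      rw [hker, LinearMap.mem_ker, map_sub, sub_eq_zero]; exact hxx
    have := projL_eq_zero (S := K) hm
    rw [map_sub, sub_eq_zero] at this
    exact this
  let g : H →ₗ[ℂ] H :=
    { toFun := fun y => projL K (c y)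
      map_add' := by
        intro y z
        have : a (c (y + z)) = a (c y + c z) := by
          rw [map_add, hc, hc, hc, map_add]
        show projL K (c (y + z)) = projL K (c y) + projL K (c z)
        rw [wd _ _ this, map_add]
      map_smul' := by
        intro r y
        have : a (c (r • y)) = a (r • c y) := by
          rw [map_smul, hc, hc, map_smul]
        show projL K (c (r • y)) = r • projL K (c y)
        rw [wd _ _ this, map_smul] }
  have hg : ∀ y, a (g y) = b y := fun y => by
    show a (projL K (c y)) = b y
    rw [key, hc]
  have hgK : ∀ y, g y ∈ K := fun y => projL_mem K _
  have cont : Continuous g := by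
    apply g.continuous_of_seq_closed_graph
    intro u x y hu hgu
    have h1 : Tendsto (fun n => a (g (u n))) atTop (𝓝 (a y)) :=
      (a.continuous.tendsto y).comp hgu
    have h2 : Tendsto (fun n => b (u n)) atTop (𝓝 (b x)) :=
      (b.continuous.tendsto x).comp hu
    have h3 : (fun n => a (g (u n))) = fun n => b (u n) := funext fun n => hg (u n)
    have hay : a y = b x := tendsto_nhds_unique (h3 ▸ h1) h2
    have hyK : y ∈ K := by
      have : IsClosed (K : Set H) := Submodule.isClosed_orthogonal _
      exact this.mem_of_tendsto hgu (Filter.Eventually.of_forall fun n => hgK (u n))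
    have hd1 : y - g x ∈ K := Submodule.sub_mem K hyK (hgK x)
    have hd2 : y - g x ∈ Kᗮ := by
      rw [hker]
      exact LinearMap.mem_ker.mpr (by rw [ContinuousLinearMap.coe_coe, map_sub, hg, hay, sub_self])
    have := (Submodule.orthogonal_disjoint K).le_bot ⟨hd1, hd2⟩
    rw [Submodule.mem_bot, sub_eq_zero] at this
    exact this
  refine ⟨⟨g, cont⟩, ?_, ?_⟩
  · ext y; exact hg y
  · rintro _ ⟨y, rfl⟩; exact hgK y

/-- `S`-complementability is equivalent to the range inclusion `R(b) ⊆ R(a)`. -/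
lemma complementable_iff (B : H →L[ℂ] H) (S : Submodule ℂ H) [CompleteSpace S] :
    IsComplementable B S ↔ LinearMap.range ((blockB B S) : H →ₗ[ℂ] H) ≤ LinearMap.range ((blockA B S) : H →ₗ[ℂ] H) := by
  constructor
  · intro h
    rintro _ ⟨y, rfl⟩
    have hy : (1 - projL S) y ∈ S ⊔ Sᗮ.comap (B : H →ₗ[ℂ] H) := by
      rw [h]; trivial
    obtain ⟨s, hs, n, hn, hsn⟩ := Submodule.mem_sup.mp hy
    refine ⟨s, ?_⟩
    have hBn : projL S (B n) = 0 := projL_eq_zero (Submodule.mem_comap.mp hn)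
    have : blockB B S y = projL S (B ((1 - projL S) y)) := by
      simp [blockB, mul_apply_eq_comp]
    rw [ContinuousLinearMap.coe_coe, ContinuousLinearMap.coe_coe, this, ← hsn, map_add, map_add, hBn, add_zero]
    simp [blockA, mul_apply_eq_comp, projL_eq_self hs]
  · intro hr
    rw [IsComplementable, eq_top_iff]
    intro x _
    obtain ⟨w, hw⟩ := hr (LinearMap.mem_range_self ((blockB B S) : H →ₗ[ℂ] H) x)
    refine Submodule.mem_sup.mpr ⟨projL S x + projL S w,
      Submodule.add_mem S (projL_mem S x) (projL_mem S w),
      x - (projL S x + projL S w), ?_, by abel⟩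
    rw [Submodule.mem_comap]
    change B (x - (projL S x + projL S w)) ∈ Sᗮ
    rw [← projL_eq_zero_iff]
    have hbb : blockB B S x = projL S (B x) - projL S (B (projL S x)) := by
      simp [blockB, mul_apply_eq_comp, map_sub]
    have hba : blockA B S w = projL S (B (projL S w)) := by
      simp [blockA, mul_apply_eq_comp]
    rw [ContinuousLinearMap.coe_coe, ContinuousLinearMap.coe_coe, hbb, hba] at hw
    have h2 : projL S (B (projL S w)) = projL S (B x) - projL S (B (projL S x)) := by
      rw [hw]
    rw [map_sub, map_add, map_sub, map_add, h2]
    abel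

/-- Existence of `|a|^{1/2}` together with the range inclusion `R(a) ⊆ R(|a|^{1/2})`,
for selfadjoint `a`. -/
lemma wc_of_selfadjoint (a : H →L[ℂ] H) (ha : IsSelfAdjoint a) :
    ∃ m : H →L[ℂ] H, m.IsPositive ∧ m ^ 4 = adjoint a * a ∧
      LinearMap.range (a : H →ₗ[ℂ] H) ≤ LinearMap.range (m : H →ₗ[ℂ] H) := by
  refine ⟨cfc (fun t : ℝ => Real.sqrt t + Real.sqrt (-t)) a, ?_, ?_, ?_⟩
  · rw [← nonneg_iff_isPositive]
    exact cfc_nonneg fun t _ => by positivity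
  · rw [← star_eq_adjoint, ha.star_eq]
    have hp : a * a = a ^ 2 := (sq a).symm
    rw [hp, ← cfc_pow (fun t : ℝ => Real.sqrt t + Real.sqrt (-t)) 4 (ha := ha),
      ← cfc_pow_id (R := ℝ) a 2 ha]
    apply cfc_congr
    intro t _
    rcases le_total 0 t with h | h
    · have h1 : Real.sqrt (-t) = 0 := Real.sqrt_eq_zero'.mpr (by simpa using h)
      have h2 : Real.sqrt t ^ 2 = t := Real.sq_sqrt h
      simp only [h1, add_zero]
      rw [show (4:ℕ) = 2*2 by norm_num, pow_mul, h2]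
    · have h1 : Real.sqrt t = 0 := Real.sqrt_eq_zero'.mpr (by simpa using h)
      have h2 : Real.sqrt (-t) ^ 2 = -t := Real.sq_sqrt (by linarith)
      simp only [h1, zero_add]
      rw [show (4:ℕ) = 2*2 by norm_num, pow_mul, h2]
      ring
  · have key : cfc (fun t : ℝ => Real.sqrt t + Real.sqrt (-t)) a *
        cfc (fun t : ℝ => Real.sqrt t - Real.sqrt (-t)) a = a := by
      rw [← cfc_mul _ _ a]
      nth_rewrite 2 [← cfc_id (R := ℝ) a ha]
      apply cfc_congr
      intro t _
      show (Real.sqrt t + Real.sqrt (-t)) * (Real.sqrt t - Real.sqrt (-t)) = t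
      have e : Real.sqrt t * Real.sqrt t - Real.sqrt (-t) * Real.sqrt (-t) = t := by
        rcases le_total 0 t with h | h
        · have h1 : Real.sqrt (-t) = 0 := Real.sqrt_eq_zero'.mpr (by simpa using h)
          rw [h1, Real.mul_self_sqrt h]; ring
        · have h1 : Real.sqrt t = 0 := Real.sqrt_eq_zero'.mpr (by simpa using h)
          rw [h1, Real.mul_self_sqrt (by linarith)]; ring
      nlinarith [Real.sqrt_nonneg t, Real.sqrt_nonneg (-t)]
    conv_lhs => rw [← key]
    exact range_mul_le _ _

/-- The `T'`-corners of a Schur complement of `B` to `T`. -/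
lemma schur_blocks (B Y m u f : H →L[ℂ] H) (T T' : Submodule ℂ H)
    [CompleteSpace T] [CompleteSpace T']
    (hTT' : projL T * projL T' = 0) (hT'T : projL T' * projL T = 0)
    (hBorth : projL T * B * projL T' = 0)
    (hm : IsSelfAdjoint m)
    (hfr : LinearMap.range (f : H →ₗ[ℂ] H) ≤ (LinearMap.range (m : H →ₗ[ℂ] H)).topologicalClosure)
    (hmf : m * f = blockB B T)
    (hY : Y = blockC B T - adjoint f * (u * f)) :
    blockA Y T' = blockA B T' ∧
      blockB Y T' = projL T' * B * (1 - (projL T + projL T')) := by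
  have e1 : projL T' * (1 - projL T) = projL T' := by
    rw [mul_sub, mul_one, hT'T, sub_zero]
  have e3 : (1 - projL T) * projL T' = projL T' := by
    rw [sub_mul, one_mul, hTT', sub_zero]
  have e2 : (1 - projL T) * (1 - projL T') = 1 - (projL T + projL T') := by
    rw [sub_mul, one_mul, mul_sub, mul_one, hTT', sub_zero]
    abel
  have hfT' : f * projL T' = 0 := by
    apply reduced_eq_zero hm (le_trans (range_mul_le f (projL T')) hfr)
    have h0 : m * (f * projL T') = blockB B T * projL T' := by
      rw [← mul_assoc, hmf]
    have regroup : blockB B T * projL T' = (projL T * B) * ((1 - projL T) * projL T') := by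
      rw [blockB]; noncomm_ring
    rw [h0, regroup, e3]; exact hBorth
  have hT'f : projL T' * adjoint f = 0 := by
    have := congrArg star hfT'
    rwa [star_mul, star_projL, star_zero, star_eq_adjoint] at this
  have hkill : ∀ X : H →L[ℂ] H, projL T' * (adjoint f * X) = 0 := fun X => by
    rw [← mul_assoc, hT'f, zero_mul]
  have hcA : projL T' * blockC B T * projL T' = blockA B T' := by
    have regroup : projL T' * blockC B T * projL T' =
        (projL T' * (1 - projL T)) * B * ((1 - projL T) * projL T') := by
      rw [blockC]; noncomm_ring
    rw [blockA, regroup, e1, e3]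
  have hz : projL T' * (blockC B T - adjoint f * (u * f)) = projL T' * blockC B T := by
    rw [mul_sub, hkill, sub_zero]
  constructor
  · rw [hY, blockA, hz, hcA]
  · rw [hY, blockB, hz]
    have regroup : projL T' * blockC B T * (1 - projL T') =
        (projL T' * (1 - projL T)) * B * ((1 - projL T) * (1 - projL T')) := by
      rw [blockC]; noncomm_ring
    rw [regroup, e1, e2]

end StmtAux

set_option maxHeartbeats 1000000
set_option synthInstance.maxHeartbeats 200000

/-- Characterizations of `S`-complementability through a decomposition `S = S₊ ⊕_B S₋`, and
the existence of a `B`-selfadjoint projection onto `S` splitting as `Q = Q₊ + Q₋`. -/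
theorem stmt_9 (B : H →L[ℂ] H) (hB : IsSelfAdjoint B)
    (S Sp Sm : Submodule ℂ H) [CompleteSpace S] [CompleteSpace Sp] [CompleteSpace Sm]
    (hdec : IsWDecomp B S Sp Sm) :
    (IsComplementable B S ↔ (IsComplementable B Sp ∧ IsComplementable B Sm)) ∧
    (IsComplementable B S ↔
      (IsWeaklyComplementable B S ∧
        (∀ Y, IsSchur B Sp Y → IsComplementable Y Sm) ∧
        (∀ Y, IsSchur B Sm Y → IsComplementable Y Sp))) ∧
    (IsComplementable B S →
      ∃ Q Qp Qm : H →L[ℂ] H, Q ∈ projSet B S ∧ Qp ∈ projSet B Sp ∧ Qm ∈ projSet B Sm ∧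
        Q = Qp + Qm ∧
        (∀ x ∈ LinearMap.range (Qp : H →ₗ[ℂ] H), ∀ y ∈ LinearMap.range (Qm : H →ₗ[ℂ] H), (inner ℂ x y : ℂ) = 0) ∧
        Qp * Qm = 0 ∧ Qm * Qp = 0) := by
  open StmtAux in
  obtain ⟨horth, hsup, hpos, hneg, hBo⟩ := hdec
  -- submodule inclusions
  have hSpS : Sp ≤ S := hsup ▸ le_sup_left
  have hSmS : Sm ≤ S := hsup ▸ le_sup_right
  have hSmSp : Sm ≤ Spᗮ := fun y hy =>
    (Submodule.mem_orthogonal Sp y).mpr fun u hu => horth u hu y hy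
  have hSpSm : Sp ≤ Smᗮ := fun x hx =>
    (Submodule.mem_orthogonal Sm x).mpr fun u hu => inner_eq_zero_symm.mp (horth x hx u hu)
  -- projection algebra
  have hPP : projL S * projL S = projL S := projL_idem S
  have hPpPp : projL Sp * projL Sp = projL Sp := projL_idem Sp
  have hPmPm : projL Sm * projL Sm = projL Sm := projL_idem Sm
  have hPPp : projL S * projL Sp = projL Sp := (projL_comp_projL_of_le hSpS).1
  have hPpP : projL Sp * projL S = projL Sp := (projL_comp_projL_of_le hSpS).2
  have hPPm : projL S * projL Sm = projL Sm := (projL_comp_projL_of_le hSmS).1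
  have hPmP : projL Sm * projL S = projL Sm := (projL_comp_projL_of_le hSmS).2
  have hPpPm : projL Sp * projL Sm = 0 :=
    projL_comp_eq_zero (by rw [range_projL]; exact hSmSp)
  have hPmPp : projL Sm * projL Sp = 0 :=
    projL_comp_eq_zero (by rw [range_projL]; exact hSpSm)
  have hstarP : star (projL S) = projL S := star_projL S
  have hstarPp : star (projL Sp) = projL Sp := star_projL Sp
  have hstarPm : star (projL Sm) = projL Sm := star_projL Sm
  -- P = Pp + Pm
  have hPsum : projL S = projL Sp + projL Sm := by
    ext x
    have hmem : projL Sp x + projL Sm x ∈ S :=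
      Submodule.add_mem S (hSpS (projL_mem Sp x)) (hSmS (projL_mem Sm x))
    have horthm : x - (projL Sp x + projL Sm x) ∈ Sᗮ := by
      rw [Submodule.mem_orthogonal]
      intro u hu
      obtain ⟨up, hup, um, hum, rfl⟩ := Submodule.mem_sup.mp (show u ∈ Sp ⊔ Sm from hsup ▸ hu)
      have h1 : (inner ℂ up (x - projL Sp x) : ℂ) = 0 :=
        (Submodule.mem_orthogonal Sp _).mp (sub_projL_mem (S := Sp) x) up hup
      have h2 : (inner ℂ up (projL Sm x) : ℂ) = 0 := horth up hup _ (projL_mem Sm x)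
      have h3 : (inner ℂ um (x - projL Sm x) : ℂ) = 0 :=
        (Submodule.mem_orthogonal Sm _).mp (sub_projL_mem (S := Sm) x) um hum
      have h4 : (inner ℂ um (projL Sp x) : ℂ) = 0 :=
        inner_eq_zero_symm.mp (horth _ (projL_mem Sp x) um hum)
      have e1 : x - (projL Sp x + projL Sm x) = (x - projL Sp x) - projL Sm x := by abel
      have e2 : x - (projL Sp x + projL Sm x) = (x - projL Sm x) - projL Sp x := by abel
      rw [inner_add_left]
      have t1 : (inner ℂ up (x - (projL Sp x + projL Sm x)) : ℂ) = 0 := by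
        rw [e1, inner_sub_right, h1, h2, sub_zero]
      have t2 : (inner ℂ um (x - (projL Sp x + projL Sm x)) : ℂ) = 0 := by
        rw [e2, inner_sub_right, h3, h4, sub_zero]
      rw [t1, t2, add_zero]
    have hd1 : projL S x - (projL Sp x + projL Sm x) ∈ S :=
      Submodule.sub_mem S (projL_mem S x) hmem
    have hd2 : projL S x - (projL Sp x + projL Sm x) ∈ Sᗮ := by
      have hxP : projL S x - x ∈ Sᗮ := by
        have := sub_projL_mem (S := S) x
        simpa using Submodule.neg_mem Sᗮ this
      have e : projL S x - (projL Sp x + projL Sm x)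
          = (projL S x - x) + (x - (projL Sp x + projL Sm x)) := by abel
      rw [e]; exact Submodule.add_mem _ hxP horthm
    have hbot := (Submodule.orthogonal_disjoint S).le_bot ⟨hd1, hd2⟩
    rw [Submodule.mem_bot, sub_eq_zero] at hbot
    simpa using hbot
  -- B-orthogonality of Sp and Sm
  have hBpm : projL Sp * B * projL Sm = 0 := by
    ext x
    have : (projL Sp * B * projL Sm) x = projL Sp (B (projL Sm x)) := by
      simp [mul_apply_eq_comp]
    rw [this]
    show _ = (0 : H →L[ℂ] H) x
    rw [zero_apply, projL_eq_zero_iff, Submodule.mem_orthogonal]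
    intro u hu
    rw [← sa_inner_shift hB u (projL Sm x)]
    exact hBo u hu _ (projL_mem Sm x)
  have hBmp : projL Sm * B * projL Sp = 0 := by
    have h := congrArg star hBpm
    rw [star_zero, star_mul, star_mul, hstarPp, hstarPm, hB.star_eq] at h
    calc projL Sm * B * projL Sp = projL Sm * (B * projL Sp) := by rw [mul_assoc]
    _ = 0 := h
  -- names for the blocks
  have hapdef : blockA B Sp = projL Sp * B * projL Sp := rfl
  have hamdef : blockA B Sm = projL Sm * B * projL Sm := rfl
  have haSdef : blockA B S = projL S * B * projL S := rfl
  have hsap : star (blockA B Sp) = blockA B Sp := by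
    rw [hapdef, star_mul, star_mul, hstarPp, hB.star_eq, mul_assoc]
  have hsam : star (blockA B Sm) = blockA B Sm := by
    rw [hamdef, star_mul, star_mul, hstarPm, hB.star_eq, mul_assoc]
  have hsaS : star (blockA B S) = blockA B S := by
    rw [haSdef, star_mul, star_mul, hstarP, hB.star_eq, mul_assoc]
  -- aS = ap + am
  have haS : blockA B S = blockA B Sp + blockA B Sm := by
    rw [haSdef, hapdef, hamdef, hPsum]
    have e : (projL Sp + projL Sm) * B * (projL Sp + projL Sm)
        = projL Sp * B * projL Sp + projL Sp * B * projL Sm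
          + (projL Sm * B * projL Sp + projL Sm * B * projL Sm) := by noncomm_ring
    rw [e, hBpm, hBmp]
    abel
  -- bp and bm in terms of  1 - P
  have hbpdef : blockB B Sp = projL Sp * B * (1 - projL Sp) := rfl
  have hbmdef : blockB B Sm = projL Sm * B * (1 - projL Sm) := rfl
  have hbSdef : blockB B S = projL S * B * (1 - projL S) := rfl
  have hbpP : blockB B Sp = projL Sp * B * (1 - projL S) := by
    rw [hbpdef]
    have e : projL Sp * B * (1 - projL Sp)
        = projL Sp * B * (1 - projL S) + projL Sp * B * (projL S - projL Sp) := by noncomm_ring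
    have e2 : projL S - projL Sp = projL Sm := by rw [hPsum]; abel
    rw [e, e2, hBpm, add_zero]
  have hbmP : blockB B Sm = projL Sm * B * (1 - projL S) := by
    rw [hbmdef]
    have e : projL Sm * B * (1 - projL Sm)
        = projL Sm * B * (1 - projL S) + projL Sm * B * (projL S - projL Sm) := by noncomm_ring
    have e2 : projL S - projL Sm = projL Sp := by rw [hPsum]; abel
    rw [e, e2, hBmp, add_zero]
  have hbppS : blockB B Sp = projL Sp * blockB B S := by
    rw [hbpP, hbSdef]
    have e : projL Sp * (projL S * B * (1 - projL S))
        = (projL Sp * projL S) * B * (1 - projL S) := by noncomm_ring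
    rw [e, hPpP]
  have hbmpS : blockB B Sm = projL Sm * blockB B S := by
    rw [hbmP, hbSdef]
    have e : projL Sm * (projL S * B * (1 - projL S))
        = (projL Sm * projL S) * B * (1 - projL S) := by noncomm_ring
    rw [e, hPmP]
  have hbS : blockB B S = blockB B Sp + blockB B Sm := by
    rw [hbpP, hbmP, hbSdef, hPsum]
    noncomm_ring
  -- products of corners vanish
  have hapam : blockA B Sp * blockA B Sm = 0 := by
    rw [hapdef, hamdef]
    have e : projL Sp * B * projL Sp * (projL Sm * B * projL Sm)
        = projL Sp * B * ((projL Sp * projL Sm) * (B * projL Sm)) := by noncomm_ring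
    rw [e, hPpPm, zero_mul, mul_zero]
  have hamap : blockA B Sm * blockA B Sp = 0 := by
    rw [hapdef, hamdef]
    have e : projL Sm * B * projL Sm * (projL Sp * B * projL Sp)
        = projL Sm * B * ((projL Sm * projL Sp) * (B * projL Sp)) := by noncomm_ring
    rw [e, hPmPp, zero_mul, mul_zero]
  have hapPp : blockA B Sp * projL Sp = blockA B Sp := by
    rw [hapdef]
    have e : projL Sp * B * projL Sp * projL Sp
        = projL Sp * B * (projL Sp * projL Sp) := by noncomm_ring
    rw [e, hPpPp]
  have hapPm : blockA B Sp * projL Sm = 0 := by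
    rw [hapdef]
    have e : projL Sp * B * projL Sp * projL Sm
        = projL Sp * B * (projL Sp * projL Sm) := by noncomm_ring
    rw [e, hPpPm, mul_zero]
  have hamPm : blockA B Sm * projL Sm = blockA B Sm := by
    rw [hamdef]
    have e : projL Sm * B * projL Sm * projL Sm
        = projL Sm * B * (projL Sm * projL Sm) := by noncomm_ring
    rw [e, hPmPm]
  have hamPp : blockA B Sm * projL Sp = 0 := by
    rw [hamdef]
    have e : projL Sm * B * projL Sm * projL Sp
        = projL Sm * B * (projL Sm * projL Sp) := by noncomm_ring
    rw [e, hPmPp, mul_zero]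
  have hPpaS : projL Sp * blockA B S = blockA B Sp := by
    rw [haS, mul_add, hapdef, hamdef]
    have e1 : projL Sp * (projL Sp * B * projL Sp)
        = (projL Sp * projL Sp) * B * projL Sp := by noncomm_ring
    have e2 : projL Sp * (projL Sm * B * projL Sm)
        = (projL Sp * projL Sm) * (B * projL Sm) := by noncomm_ring
    rw [e1, e2, hPpPp, hPpPm, zero_mul, add_zero]
  have hPmaS : projL Sm * blockA B S = blockA B Sm := by
    rw [haS, mul_add, hapdef, hamdef]
    have e1 : projL Sm * (projL Sm * B * projL Sm)
        = (projL Sm * projL Sm) * B * projL Sm := by noncomm_ring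
    have e2 : projL Sm * (projL Sp * B * projL Sp)
        = (projL Sm * projL Sp) * (B * projL Sp) := by noncomm_ring
    rw [e1, e2, hPmPm, hPmPp, zero_mul, zero_add]
  -- (i) ↔ (ii) at the level of ranges
  have hii_of_i : LinearMap.range ((blockB B S) : H →ₗ[ℂ] H) ≤ LinearMap.range ((blockA B S) : H →ₗ[ℂ] H) →
      LinearMap.range ((blockB B Sp) : H →ₗ[ℂ] H) ≤ LinearMap.range ((blockA B Sp) : H →ₗ[ℂ] H) ∧
      LinearMap.range ((blockB B Sm) : H →ₗ[ℂ] H) ≤ LinearMap.range ((blockA B Sm) : H →ₗ[ℂ] H) := by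
    intro h
    constructor
    · rintro _ ⟨y, rfl⟩
      obtain ⟨z, hz⟩ := h (LinearMap.mem_range_self ((blockB B S) : H →ₗ[ℂ] H) y)
      refine ⟨z, ?_⟩
      have : blockB B Sp y = projL Sp (blockB B S y) := by rw [hbppS]; simp [mul_apply_eq_comp]
      simp only [ContinuousLinearMap.coe_coe] at hz ⊢
      rw [this, ← hz, ← mul_apply_eq_comp (projL Sp) (blockA B S) z, hPpaS]
    · rintro _ ⟨y, rfl⟩
      obtain ⟨z, hz⟩ := h (LinearMap.mem_range_self ((blockB B S) : H →ₗ[ℂ] H) y)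
      refine ⟨z, ?_⟩
      have : blockB B Sm y = projL Sm (blockB B S y) := by rw [hbmpS]; simp [mul_apply_eq_comp]
      simp only [ContinuousLinearMap.coe_coe] at hz ⊢
      rw [this, ← hz, ← mul_apply_eq_comp (projL Sm) (blockA B S) z, hPmaS]
  have hi_of_ii : LinearMap.range ((blockB B Sp) : H →ₗ[ℂ] H) ≤ LinearMap.range ((blockA B Sp) : H →ₗ[ℂ] H) →
      LinearMap.range ((blockB B Sm) : H →ₗ[ℂ] H) ≤ LinearMap.range ((blockA B Sm) : H →ₗ[ℂ] H) →
      LinearMap.range ((blockB B S) : H →ₗ[ℂ] H) ≤ LinearMap.range ((blockA B S) : H →ₗ[ℂ] H) := by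
    intro h1 h2
    rintro _ ⟨y, rfl⟩
    obtain ⟨z1, hz1⟩ := h1 (LinearMap.mem_range_self ((blockB B Sp) : H →ₗ[ℂ] H) y)
    obtain ⟨z2, hz2⟩ := h2 (LinearMap.mem_range_self ((blockB B Sm) : H →ₗ[ℂ] H) y)
    refine ⟨projL Sp z1 + projL Sm z2, ?_⟩
    have e : blockA B S * (projL Sp) = blockA B Sp ∧ blockA B S * (projL Sm) = blockA B Sm := by
      constructor
      · rw [haS, add_mul, hapPp, hamPp, add_zero]
      · rw [haS, add_mul, hapPm, hamPm, zero_add]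
    have : blockA B S (projL Sp z1 + projL Sm z2)
        = blockA B Sp z1 + blockA B Sm z2 := by
      rw [map_add, ← mul_apply_eq_comp (blockA B S) (projL Sp) z1, ← mul_apply_eq_comp (blockA B S) (projL Sm) z2,
        e.1, e.2]
    simp only [ContinuousLinearMap.coe_coe] at hz1 hz2 ⊢
    rw [this, hz1, hz2]
    have : blockB B S y = blockB B Sp y + blockB B Sm y := by rw [hbS]; simp
    rw [this]
  have claim1 : IsComplementable B S ↔ (IsComplementable B Sp ∧ IsComplementable B Sm) := by
    rw [complementable_iff B S, complementable_iff B Sp, complementable_iff B Sm]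
    exact ⟨fun h => hii_of_i h, fun h => hi_of_ii h.1 h.2⟩
  -- positivity of the corners
  have happos : 0 ≤ blockA B Sp := by
    rw [nonneg_iff_isPositive, isPositive_def']
    refine ⟨hsap, fun x => ?_⟩
    have e : (blockA B Sp) x = projL Sp (B (projL Sp x)) := by
      rw [hapdef]; simp [mul_apply_eq_comp]
    have e2 : (inner ℂ ((blockA B Sp) x) x : ℂ) = inner ℂ (B (projL Sp x)) (projL Sp x) := by
      rw [e, sa_inner_shift (projL_sa Sp) (B (projL Sp x)) x]
    have := hpos _ (projL_mem Sp x)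
    simp only [reApplyInnerSelf, RCLike.re_to_complex, e2]
    exact this
  have hamneg : 0 ≤ -(blockA B Sm) := by
    rw [nonneg_iff_isPositive, isPositive_def']
    refine ⟨by rw [IsSelfAdjoint, star_neg, hsam], fun x => ?_⟩
    have e : (blockA B Sm) x = projL Sm (B (projL Sm x)) := by
      rw [hamdef]; simp [mul_apply_eq_comp]
    have e2 : (inner ℂ ((blockA B Sm) x) x : ℂ) = inner ℂ (B (projL Sm x)) (projL Sm x) := by
      rw [e, sa_inner_shift (projL_sa Sm) (B (projL Sm x)) x]
    have := hneg _ (projL_mem Sm x)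
    simp only [reApplyInnerSelf, RCLike.re_to_complex, neg_apply, inner_neg_left, Complex.neg_re, e2]
    linarith
  -- (i) → weak complementability
  have hwc_of_i : IsComplementable B S → IsWeaklyComplementable B S := by
    intro h
    obtain ⟨m, hmP, hm4, hmr⟩ := wc_of_selfadjoint (blockA B S) hsaS
    exact ⟨m, ⟨hmP, hm4⟩, le_trans ((complementable_iff B S).mp h) hmr⟩
  -- (i) → the two Schur conditions
  have hschur_p : IsComplementable B S → ∀ Y, IsSchur B Sp Y → IsComplementable Y Sm := by
    intro h Y hY
    obtain ⟨m, u, f, ⟨hmP, hm4⟩, hku, hiso, hum, hmf, hfr, hYdef⟩ := hY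
    obtain ⟨hbl1, hbl2⟩ := schur_blocks B Y m u f Sp Sm hPpPm hPmPp hBpm
      hmP.isSelfAdjoint hfr hmf hYdef
    rw [complementable_iff, hbl1, hbl2, ← hPsum, ← hbmP]
    exact (hii_of_i ((complementable_iff B S).mp h)).2
  have hschur_m : IsComplementable B S → ∀ Y, IsSchur B Sm Y → IsComplementable Y Sp := by
    intro h Y hY
    obtain ⟨m, u, f, ⟨hmP, hm4⟩, hku, hiso, hum, hmf, hfr, hYdef⟩ := hY
    obtain ⟨hbl1, hbl2⟩ := schur_blocks B Y m u f Sm Sp hPmPp hPpPm hBmp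
      hmP.isSelfAdjoint hfr hmf hYdef
    rw [complementable_iff, hbl1, hbl2, add_comm (projL Sm) (projL Sp), ← hPsum, ← hbpP]
    exact (hii_of_i ((complementable_iff B S).mp h)).1
  -- (iii) → (i)
  have hiii_to_i : IsWeaklyComplementable B S →
      (∀ Y, IsSchur B Sp Y → IsComplementable Y Sm) →
      (∀ Y, IsSchur B Sm Y → IsComplementable Y Sp) → IsComplementable B S := by
    intro hwc hYp hYm
    obtain ⟨m, ⟨hmP, hm4⟩, hmr⟩ := hwc
    have hm0 : 0 ≤ m := (nonneg_iff_isPositive m).mpr hmP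
    have hmsa : IsSelfAdjoint m := hmP.isSelfAdjoint
    obtain ⟨mp, hmp0, hmp2⟩ : ∃ mp : H →L[ℂ] H, 0 ≤ mp ∧ mp * mp = blockA B Sp :=
      ⟨CFC.sqrt _, CFC.sqrt_nonneg _, CFC.sqrt_mul_sqrt_self _ happos⟩
    obtain ⟨mm, hmm0, hmm2⟩ : ∃ mm : H →L[ℂ] H, 0 ≤ mm ∧ mm * mm = -(blockA B Sm) :=
      ⟨CFC.sqrt _, CFC.sqrt_nonneg _, CFC.sqrt_mul_sqrt_self _ hamneg⟩
    have hmpsa : IsSelfAdjoint mp := .of_nonneg hmp0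
    have hmmsa : IsSelfAdjoint mm := .of_nonneg hmm0
    have hkerp : ∀ x : H, projL Sp x = 0 → mp x = 0 := by
      intro x hx
      apply sa_ker_sq hmpsa
      have e : mp (mp x) = (blockA B Sp) x := by rw [← mul_apply_eq_comp, hmp2]
      rw [e, hapdef]
      simp [mul_apply_eq_comp, hx]
    have hkerm : ∀ x : H, projL Sm x = 0 → mm x = 0 := by
      intro x hx
      apply sa_ker_sq hmmsa
      have e : mm (mm x) = (-(blockA B Sm)) x := by rw [← mul_apply_eq_comp, hmm2]
      rw [e, hamdef]
      simp [mul_apply_eq_comp, hx]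
    have hmpPp : mp * projL Sp = mp := by
      ext x
      have h2 : projL Sp (x - projL Sp x) = 0 := by
        rw [map_sub, ← mul_apply_eq_comp (projL Sp) (projL Sp) x, hPpPp, sub_self]
      have h3 := hkerp _ h2
      rw [map_sub, sub_eq_zero] at h3
      simpa [mul_apply_eq_comp] using h3.symm
    have hmmPm : mm * projL Sm = mm := by
      ext x
      have h2 : projL Sm (x - projL Sm x) = 0 := by
        rw [map_sub, ← mul_apply_eq_comp (projL Sm) (projL Sm) x, hPmPm, sub_self]
      have h3 := hkerm _ h2
      rw [map_sub, sub_eq_zero] at h3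
      simpa [mul_apply_eq_comp] using h3.symm
    have hPpmp : projL Sp * mp = mp := by
      have h := congrArg star hmpPp
      rwa [star_mul, hstarPp, hmpsa.star_eq] at h
    have hPmmm : projL Sm * mm = mm := by
      have h := congrArg star hmmPm
      rwa [star_mul, hstarPm, hmmsa.star_eq] at h
    have hrangemp : LinearMap.range (mp : H →ₗ[ℂ] H) ≤ Sp := by
      rintro _ ⟨x, rfl⟩
      have : mp x = projL Sp (mp x) := by
        rw [← mul_apply_eq_comp (projL Sp) mp x, hPpmp]
      rw [ContinuousLinearMap.coe_coe, this]; exact projL_mem Sp _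
    have hrangemm : LinearMap.range (mm : H →ₗ[ℂ] H) ≤ Sm := by
      rintro _ ⟨x, rfl⟩
      have : mm x = projL Sm (mm x) := by
        rw [← mul_apply_eq_comp (projL Sm) mm x, hPmmm]
      rw [ContinuousLinearMap.coe_coe, this]; exact projL_mem Sm _
    have hmmmp : mm * mp = 0 := by
      ext x
      have h1 : projL Sm (mp x) = 0 :=
        projL_eq_zero (hSpSm (hrangemp (LinearMap.mem_range_self (mp : H →ₗ[ℂ] H) x)))
      simpa [mul_apply_eq_comp] using hkerm _ h1
    have hmpmm : mp * mm = 0 := by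
      have h := congrArg star hmmmp
      rwa [star_mul, hmpsa.star_eq, hmmsa.star_eq, star_zero] at h
    have hsum2 : (mp + mm) * (mp + mm) = blockA B Sp - blockA B Sm := by
      have e : (mp + mm) * (mp + mm) = mp*mp + (mp*mm + mm*mp) + mm*mm := by noncomm_ring
      rw [e, hmpmm, hmmmp, hmp2, hmm2]
      simp [sub_eq_add_neg]
    have hDpos : 0 ≤ blockA B Sp - blockA B Sm := by
      have := add_nonneg happos hamneg
      rwa [← sub_eq_add_neg] at this
    have hmm4 : (m * m) * (m * m)
        = (blockA B Sp - blockA B Sm) * (blockA B Sp - blockA B Sm) := by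
      have e0 : (m*m)*(m*m) = m^4 := by noncomm_ring
      rw [e0, hm4, ← star_eq_adjoint, hsaS, haS]
      have e1 : (blockA B Sp + blockA B Sm) * (blockA B Sp + blockA B Sm)
          = blockA B Sp * blockA B Sp + (blockA B Sp * blockA B Sm + blockA B Sm * blockA B Sp)
            + blockA B Sm * blockA B Sm := by noncomm_ring
      have e2 : (blockA B Sp - blockA B Sm) * (blockA B Sp - blockA B Sm)
          = blockA B Sp * blockA B Sp - (blockA B Sp * blockA B Sm + blockA B Sm * blockA B Sp)
            + blockA B Sm * blockA B Sm := by noncomm_ring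
      rw [e1, e2, hapam, hamap]
      abel
    have hmsq0 : 0 ≤ m * m := by
      have := star_mul_self_nonneg m
      rwa [hmsa.star_eq] at this
    have hm2 : m * m = blockA B Sp - blockA B Sm := by
      have u1 : CFC.sqrt ((blockA B Sp - blockA B Sm) * (blockA B Sp - blockA B Sm)) = m * m :=
        CFC.sqrt_unique hmm4 hmsq0
      have u2 : CFC.sqrt ((blockA B Sp - blockA B Sm) * (blockA B Sp - blockA B Sm))
          = blockA B Sp - blockA B Sm := CFC.sqrt_unique rfl hDpos
      rw [← u1, u2]
    have hmsum : m = mp + mm := by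
      have u1 : CFC.sqrt (blockA B Sp - blockA B Sm) = m := CFC.sqrt_unique hm2 hm0
      have u2 : CFC.sqrt (blockA B Sp - blockA B Sm) = mp + mm :=
        CFC.sqrt_unique hsum2 (add_nonneg hmp0 hmm0)
      rw [← u1, u2]
    have hPpm : projL Sp * m = mp := by
      rw [hmsum, mul_add, hPpmp, projL_comp_eq_zero (le_trans hrangemm hSmSp), add_zero]
    have hPmm : projL Sm * m = mm := by
      rw [hmsum, mul_add, hPmmm, projL_comp_eq_zero (le_trans hrangemp hSpSm), zero_add]
    have hrbp : LinearMap.range ((blockB B Sp) : H →ₗ[ℂ] H) ≤ LinearMap.range (mp : H →ₗ[ℂ] H) := by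
      rintro _ ⟨y, rfl⟩
      obtain ⟨z, hz⟩ := hmr (LinearMap.mem_range_self ((blockB B S) : H →ₗ[ℂ] H) y)
      refine ⟨z, ?_⟩
      have e : blockB B Sp y = projL Sp (blockB B S y) := by rw [hbppS]; simp [mul_apply_eq_comp]
      simp only [ContinuousLinearMap.coe_coe] at hz ⊢
      rw [e, ← hz, ← mul_apply_eq_comp (projL Sp) m z, hPpm]
    have hrbm : LinearMap.range ((blockB B Sm) : H →ₗ[ℂ] H) ≤ LinearMap.range (mm : H →ₗ[ℂ] H) := by
      rintro _ ⟨y, rfl⟩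
      obtain ⟨z, hz⟩ := hmr (LinearMap.mem_range_self ((blockB B S) : H →ₗ[ℂ] H) y)
      refine ⟨z, ?_⟩
      have e : blockB B Sm y = projL Sm (blockB B S y) := by rw [hbmpS]; simp [mul_apply_eq_comp]
      simp only [ContinuousLinearMap.coe_coe] at hz ⊢
      rw [e, ← hz, ← mul_apply_eq_comp (projL Sm) m z, hPmm]
    -- the canonical Schur complement over Sp
    obtain ⟨f, hf1, hf2⟩ := douglas mp (blockB B Sp) hrbp
    have hffr : LinearMap.range (f : H →ₗ[ℂ] H) ≤ (LinearMap.range (mp : H →ₗ[ℂ] H)).topologicalClosure := by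
      rw [← sa_orth_ker hmpsa]; exact hf2
    have hrm : LinearMap.range ((blockB B Sm) : H →ₗ[ℂ] H) ≤ LinearMap.range ((blockA B Sm) : H →ₗ[ℂ] H) := by
      have hker_u : LinearMap.ker ((projL ((LinearMap.ker ((blockA B Sp) : H →ₗ[ℂ] H))ᗮ)) : H →ₗ[ℂ] H)
          = LinearMap.ker ((blockA B Sp) : H →ₗ[ℂ] H) := by
        rw [ker_projL, Submodule.orthogonal_orthogonal]
      have hiso : ∀ x ∈ (LinearMap.ker ((blockA B Sp) : H →ₗ[ℂ] H))ᗮ,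
          ‖(projL ((LinearMap.ker ((blockA B Sp) : H →ₗ[ℂ] H))ᗮ)) x‖ = ‖x‖ := fun x hx => by
        rw [projL_eq_self hx]
      have hum : blockA B Sp = projL ((LinearMap.ker ((blockA B Sp) : H →ₗ[ℂ] H))ᗮ) * mp ^ 2 := by
        rw [pow_two, hmp2]
        exact (projL_comp_of_range_le (sa_range_le_orth_ker hsap)).symm
      have hm4p : mp ^ 4 = adjoint (blockA B Sp) * blockA B Sp := by
        rw [← star_eq_adjoint, hsap]
        have e : mp ^ 4 = (mp * mp) * (mp * mp) := by noncomm_ring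
        rw [e, hmp2]
      have hSchurP : IsSchur B Sp (blockC B Sp
          - adjoint f * (projL ((LinearMap.ker ((blockA B Sp) : H →ₗ[ℂ] H))ᗮ) * f)) :=
        ⟨mp, projL ((LinearMap.ker ((blockA B Sp) : H →ₗ[ℂ] H))ᗮ), f,
          ⟨(nonneg_iff_isPositive mp).mp hmp0, hm4p⟩, hker_u, hiso, hum, hf1, hffr, rfl⟩
      have hYpc := hYp _ hSchurP
      obtain ⟨hbl1, hbl2⟩ := schur_blocks B _ mp (projL ((LinearMap.ker ((blockA B Sp) : H →ₗ[ℂ] H))ᗮ)) f Sp Sm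
        hPpPm hPmPp hBpm hmpsa hffr hf1 rfl
      have := (complementable_iff _ Sm).mp hYpc
      rwa [hbl1, hbl2, ← hPsum, ← hbmP] at this
    -- the canonical Schur complement over Sm
    obtain ⟨g, hg1, hg2⟩ := douglas mm (blockB B Sm) hrbm
    have hggr : LinearMap.range (g : H →ₗ[ℂ] H) ≤ (LinearMap.range (mm : H →ₗ[ℂ] H)).topologicalClosure := by
      rw [← sa_orth_ker hmmsa]; exact hg2
    have hrp : LinearMap.range ((blockB B Sp) : H →ₗ[ℂ] H) ≤ LinearMap.range ((blockA B Sp) : H →ₗ[ℂ] H) := by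
      have hker_u : LinearMap.ker ((-(projL ((LinearMap.ker ((blockA B Sm) : H →ₗ[ℂ] H))ᗮ))) : H →ₗ[ℂ] H)
          = LinearMap.ker ((blockA B Sm) : H →ₗ[ℂ] H) := by
        have e : LinearMap.ker ((-(projL ((LinearMap.ker ((blockA B Sm) : H →ₗ[ℂ] H))ᗮ))) : H →ₗ[ℂ] H)
            = LinearMap.ker ((projL ((LinearMap.ker ((blockA B Sm) : H →ₗ[ℂ] H))ᗮ)) : H →ₗ[ℂ] H) := by
          ext x
          simp [LinearMap.mem_ker, neg_eq_zero]
        rw [e, ker_projL, Submodule.orthogonal_orthogonal]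
      have hiso : ∀ x ∈ (LinearMap.ker ((blockA B Sm) : H →ₗ[ℂ] H))ᗮ,
          ‖(-(projL ((LinearMap.ker ((blockA B Sm) : H →ₗ[ℂ] H))ᗮ))) x‖ = ‖x‖ := fun x hx => by
        rw [neg_apply, norm_neg, projL_eq_self hx]
      have hum : blockA B Sm = -(projL ((LinearMap.ker ((blockA B Sm) : H →ₗ[ℂ] H))ᗮ)) * mm ^ 2 := by
        rw [pow_two, hmm2, neg_mul_neg]
        exact (projL_comp_of_range_le (sa_range_le_orth_ker hsam)).symm
      have hm4m : mm ^ 4 = adjoint (blockA B Sm) * blockA B Sm := by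
        rw [← star_eq_adjoint, hsam]
        have e : mm ^ 4 = (mm * mm) * (mm * mm) := by noncomm_ring
        rw [e, hmm2, neg_mul_neg]
      have hSchurM : IsSchur B Sm (blockC B Sm
          - adjoint g * (-(projL ((LinearMap.ker ((blockA B Sm) : H →ₗ[ℂ] H))ᗮ)) * g)) :=
        ⟨mm, -(projL ((LinearMap.ker ((blockA B Sm) : H →ₗ[ℂ] H))ᗮ)), g,
          ⟨(nonneg_iff_isPositive mm).mp hmm0, hm4m⟩, hker_u, hiso, hum, hg1, hggr, rfl⟩
      have hYmc := hYm _ hSchurM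
      obtain ⟨hbl1, hbl2⟩ := schur_blocks B _ mm (-(projL ((LinearMap.ker ((blockA B Sm) : H →ₗ[ℂ] H))ᗮ))) g Sm Sp
        hPmPp hPpPm hBmp hmmsa hggr hg1 rfl
      have := (complementable_iff _ Sp).mp hYmc
      rwa [hbl1, hbl2, add_comm (projL Sm) (projL Sp), ← hPsum, ← hbpP] at this
    exact claim1.mpr ⟨(complementable_iff B Sp).mpr hrp, (complementable_iff B Sm).mpr hrm⟩
  -- an idempotent fact for 1 - P
  have h1mP : (1 - projL S) * (1 - projL S) = 1 - projL S := by
    rw [mul_sub, mul_one, sub_mul, one_mul, hPP, sub_self, sub_zero]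
  have h1mPP : (1 - projL S) * projL S = 0 := by
    rw [sub_mul, one_mul, hPP, sub_self]
  have h1mPPp : (1 - projL S) * projL Sp = 0 := by
    rw [sub_mul, one_mul, hPPp, sub_self]
  have h1mPPm : (1 - projL S) * projL Sm = 0 := by
    rw [sub_mul, one_mul, hPPm, sub_self]
  have hbp_sub : blockB B Sp = projL Sp * B - blockA B Sp := by
    rw [hbpdef, hapdef]; noncomm_ring
  have hbm_sub : blockB B Sm = projL Sm * B - blockA B Sm := by
    rw [hbmdef, hamdef]; noncomm_ring
  -- Part 3: construction of the projections
  have hpart3 : IsComplementable B S →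
      ∃ Q Qp Qm : H →L[ℂ] H, Q ∈ projSet B S ∧ Qp ∈ projSet B Sp ∧ Qm ∈ projSet B Sm ∧
        Q = Qp + Qm ∧
        (∀ x ∈ LinearMap.range (Qp : H →ₗ[ℂ] H), ∀ y ∈ LinearMap.range (Qm : H →ₗ[ℂ] H), (inner ℂ x y : ℂ) = 0) ∧
        Qp * Qm = 0 ∧ Qm * Qp = 0 := by
    intro h
    obtain ⟨hrp, hrm⟩ := hii_of_i ((complementable_iff B S).mp h)
    obtain ⟨solp, hsolp1, hsolp2⟩ := douglas (blockA B Sp) (blockB B Sp) hrp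
    obtain ⟨solm, hsolm1, hsolm2⟩ := douglas (blockA B Sm) (blockB B Sm) hrm
    have hkerap : Spᗮ ≤ LinearMap.ker ((blockA B Sp) : H →ₗ[ℂ] H) := by
      intro v hv
      rw [LinearMap.mem_ker, hapdef]
      simp [mul_apply_eq_comp, projL_eq_zero hv]
    have hkeram : Smᗮ ≤ LinearMap.ker ((blockA B Sm) : H →ₗ[ℂ] H) := by
      intro v hv
      rw [LinearMap.mem_ker, hamdef]
      simp [mul_apply_eq_comp, projL_eq_zero hv]
    have hsolpR : LinearMap.range (solp : H →ₗ[ℂ] H) ≤ Sp := by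
      refine le_trans hsolp2 ?_
      have := Submodule.orthogonal_le hkerap
      rwa [Submodule.orthogonal_orthogonal] at this
    have hsolmR : LinearMap.range (solm : H →ₗ[ℂ] H) ≤ Sm := by
      refine le_trans hsolm2 ?_
      have := Submodule.orthogonal_le hkeram
      rwa [Submodule.orthogonal_orthogonal] at this
    obtain ⟨sp, hsp⟩ : ∃ sp : H →L[ℂ] H, sp = solp * (1 - projL S) := ⟨_, rfl⟩
    obtain ⟨sm, hsm⟩ : ∃ sm : H →L[ℂ] H, sm = solm * (1 - projL S) := ⟨_, rfl⟩
    -- basic facts for sp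
    have fsp_ap : blockA B Sp * sp = blockB B Sp := by
      rw [hsp, ← mul_assoc, hsolp1, hbpP, mul_assoc, h1mP]
    have fsp_Pp : projL Sp * sp = sp :=
      projL_comp_of_range_le (le_trans (by rw [hsp]; exact range_mul_le _ _) hsolpR)
    have fsp_P0 : sp * projL S = 0 := by
      rw [hsp, mul_assoc, h1mPP, mul_zero]
    have fsp_Pp0 : sp * projL Sp = 0 := by
      rw [hsp, mul_assoc, h1mPPp, mul_zero]
    have fsp_Pm0 : sp * projL Sm = 0 := by
      rw [hsp, mul_assoc, h1mPPm, mul_zero]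
    -- basic facts for sm
    have fsm_am : blockA B Sm * sm = blockB B Sm := by
      rw [hsm, ← mul_assoc, hsolm1, hbmP, mul_assoc, h1mP]
    have fsm_Pm : projL Sm * sm = sm :=
      projL_comp_of_range_le (le_trans (by rw [hsm]; exact range_mul_le _ _) hsolmR)
    have fsm_P0 : sm * projL S = 0 := by
      rw [hsm, mul_assoc, h1mPP, mul_zero]
    have fsm_Pm0 : sm * projL Sm = 0 := by
      rw [hsm, mul_assoc, h1mPPm, mul_zero]
    have fsm_Pp0 : sm * projL Sp = 0 := by
      rw [hsm, mul_assoc, h1mPPp, mul_zero]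
    -- B-selfadjointness of Qp = Pp + sp
    have r1 : projL Sp * B * sp = projL Sp * B - blockA B Sp := by
      have e0 : projL Sp * B * sp = projL Sp * B * (projL Sp * sp) := by rw [fsp_Pp]
      have e : projL Sp * B * (projL Sp * sp) = (projL Sp * B * projL Sp) * sp := by
        noncomm_ring
      rw [e0, e, ← hapdef, fsp_ap, hbp_sub]
    have r2 : star sp * (B * projL Sp) = B * projL Sp - blockA B Sp := by
      have h2 := congrArg star r1
      rw [star_mul, star_mul, hB.star_eq, hstarPp, star_sub, star_mul, hB.star_eq, hstarPp,
        hsap] at h2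
      exact h2
    have r3 : star sp * (B * sp) = B * sp - blockB B Sp := by
      have e0 : star sp * (B * sp) = star sp * (B * (projL Sp * sp)) := by rw [fsp_Pp]
      have e : star sp * (B * (projL Sp * sp)) = (star sp * (B * projL Sp)) * sp := by
        noncomm_ring
      have e3 : B * projL Sp * sp = B * sp := by rw [mul_assoc, fsp_Pp]
      rw [e0, e, r2, sub_mul, e3, fsp_ap]
    have hstar_q : star (projL Sp + sp) = projL Sp + star sp := by
      rw [star_add, hstarPp]
    have key : B * (projL Sp + sp) = star (projL Sp + sp) * B * (projL Sp + sp) := by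
      rw [hstar_q]
      have expand : (projL Sp + star sp) * B * (projL Sp + sp)
          = projL Sp * B * projL Sp + projL Sp * B * sp
            + (star sp * (B * projL Sp) + star sp * (B * sp)) := by noncomm_ring
      rw [expand, r1, r3, r2, ← hapdef, hbp_sub, mul_add]
      abel
    have hsapq : star (B * (projL Sp + sp)) = B * (projL Sp + sp) := by
      conv_lhs => rw [key]
      have e : star (star (projL Sp + sp) * B * (projL Sp + sp))
          = star (projL Sp + sp) * (star B * star (star (projL Sp + sp))) := by
        rw [star_mul, star_mul]
      rw [e, star_star, hB.star_eq, ← mul_assoc, ← key]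
    have hQpB : B * (projL Sp + sp) = adjoint (projL Sp + sp) * B := by
      rw [← star_eq_adjoint]
      calc B * (projL Sp + sp) = star (B * (projL Sp + sp)) := hsapq.symm
      _ = star (projL Sp + sp) * star B := by rw [star_mul]
      _ = star (projL Sp + sp) * B := by rw [hB.star_eq]
    -- idempotency and range of Qp
    have hsps0 : sp * sp = 0 := by
      have e : sp * sp = sp * (projL Sp * sp) := by rw [fsp_Pp]
      rw [e, ← mul_assoc, fsp_Pp0, zero_mul]
    have hQp2 : (projL Sp + sp) * (projL Sp + sp) = projL Sp + sp := by
      have expand : (projL Sp + sp) * (projL Sp + sp)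
          = projL Sp * projL Sp + projL Sp * sp + (sp * projL Sp + sp * sp) := by noncomm_ring
      rw [expand, hPpPp, fsp_Pp, fsp_Pp0, hsps0]
      abel
    have hQpr : LinearMap.range ((projL Sp + sp) : H →ₗ[ℂ] H) = Sp := by
      apply le_antisymm
      · rintro _ ⟨x, rfl⟩
        rw [← ContinuousLinearMap.coe_add, ContinuousLinearMap.coe_coe, add_apply]
        refine Submodule.add_mem Sp (projL_mem Sp x) ?_
        have e : sp x = projL Sp (sp x) := by rw [← mul_apply_eq_comp, fsp_Pp]
        rw [e]; exact projL_mem Sp _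
      · intro t ht
        refine ⟨t, ?_⟩
        have e1 : projL Sp t = t := projL_eq_self ht
        have e2 : sp t = 0 := by
          rw [hsp, mul_apply_eq_comp, sub_apply, one_apply_eq_self, projL_eq_self (hSpS ht), sub_self, map_zero]
        rw [← ContinuousLinearMap.coe_add, ContinuousLinearMap.coe_coe, add_apply, e1, e2, add_zero]
    -- B-selfadjointness of Qm = Pm + sm (mirrored)
    have s1 : projL Sm * B * sm = projL Sm * B - blockA B Sm := by
      have e0 : projL Sm * B * sm = projL Sm * B * (projL Sm * sm) := by rw [fsm_Pm]
      have e : projL Sm * B * (projL Sm * sm) = (projL Sm * B * projL Sm) * sm := by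
        noncomm_ring
      rw [e0, e, ← hamdef, fsm_am, hbm_sub]
    have s2 : star sm * (B * projL Sm) = B * projL Sm - blockA B Sm := by
      have h2 := congrArg star s1
      rw [star_mul, star_mul, hB.star_eq, hstarPm, star_sub, star_mul, hB.star_eq, hstarPm,
        hsam] at h2
      exact h2
    have s3 : star sm * (B * sm) = B * sm - blockB B Sm := by
      have e0 : star sm * (B * sm) = star sm * (B * (projL Sm * sm)) := by rw [fsm_Pm]
      have e : star sm * (B * (projL Sm * sm)) = (star sm * (B * projL Sm)) * sm := by
        noncomm_ring
      have e3 : B * projL Sm * sm = B * sm := by rw [mul_assoc, fsm_Pm]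
      rw [e0, e, s2, sub_mul, e3, fsm_am]
    have hstar_qm : star (projL Sm + sm) = projL Sm + star sm := by
      rw [star_add, hstarPm]
    have keym : B * (projL Sm + sm) = star (projL Sm + sm) * B * (projL Sm + sm) := by
      rw [hstar_qm]
      have expand : (projL Sm + star sm) * B * (projL Sm + sm)
          = projL Sm * B * projL Sm + projL Sm * B * sm
            + (star sm * (B * projL Sm) + star sm * (B * sm)) := by noncomm_ring
      rw [expand, s1, s3, s2, ← hamdef, hbm_sub, mul_add]
      abel
    have hsamq : star (B * (projL Sm + sm)) = B * (projL Sm + sm) := by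
      conv_lhs => rw [keym]
      have e : star (star (projL Sm + sm) * B * (projL Sm + sm))
          = star (projL Sm + sm) * (star B * star (star (projL Sm + sm))) := by
        rw [star_mul, star_mul]
      rw [e, star_star, hB.star_eq, ← mul_assoc, ← keym]
    have hQmB : B * (projL Sm + sm) = adjoint (projL Sm + sm) * B := by
      rw [← star_eq_adjoint]
      calc B * (projL Sm + sm) = star (B * (projL Sm + sm)) := hsamq.symm
      _ = star (projL Sm + sm) * star B := by rw [star_mul]
      _ = star (projL Sm + sm) * B := by rw [hB.star_eq]
    have hsms0 : sm * sm = 0 := by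
      have e : sm * sm = sm * (projL Sm * sm) := by rw [fsm_Pm]
      rw [e, ← mul_assoc, fsm_Pm0, zero_mul]
    have hQm2 : (projL Sm + sm) * (projL Sm + sm) = projL Sm + sm := by
      have expand : (projL Sm + sm) * (projL Sm + sm)
          = projL Sm * projL Sm + projL Sm * sm + (sm * projL Sm + sm * sm) := by noncomm_ring
      rw [expand, hPmPm, fsm_Pm, fsm_Pm0, hsms0]
      abel
    have hQmr : LinearMap.range ((projL Sm + sm) : H →ₗ[ℂ] H) = Sm := by
      apply le_antisymm
      · rintro _ ⟨x, rfl⟩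
        rw [← ContinuousLinearMap.coe_add, ContinuousLinearMap.coe_coe, add_apply]
        refine Submodule.add_mem Sm (projL_mem Sm x) ?_
        have e : sm x = projL Sm (sm x) := by rw [← mul_apply_eq_comp, fsm_Pm]
        rw [e]; exact projL_mem Sm _
      · intro t ht
        refine ⟨t, ?_⟩
        have e1 : projL Sm t = t := projL_eq_self ht
        have e2 : sm t = 0 := by
          rw [hsm, mul_apply_eq_comp, sub_apply, one_apply_eq_self, projL_eq_self (hSmS ht), sub_self, map_zero]
        rw [← ContinuousLinearMap.coe_add, ContinuousLinearMap.coe_coe, add_apply, e1, e2, add_zero]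
    -- products of the two projections vanish
    have hPpsm : projL Sp * sm = 0 := by
      have e : projL Sp * sm = projL Sp * (projL Sm * sm) := by rw [fsm_Pm]
      rw [e, ← mul_assoc, hPpPm, zero_mul]
    have hPmsp : projL Sm * sp = 0 := by
      have e : projL Sm * sp = projL Sm * (projL Sp * sp) := by rw [fsp_Pp]
      rw [e, ← mul_assoc, hPmPp, zero_mul]
    have hspsm : sp * sm = 0 := by
      have e : sp * sm = sp * (projL Sm * sm) := by rw [fsm_Pm]
      rw [e, ← mul_assoc, fsp_Pm0, zero_mul]
    have hsmsp : sm * sp = 0 := by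
      have e : sm * sp = sm * (projL Sp * sp) := by rw [fsp_Pp]
      rw [e, ← mul_assoc, fsm_Pp0, zero_mul]
    have hQpQm : (projL Sp + sp) * (projL Sm + sm) = 0 := by
      have expand : (projL Sp + sp) * (projL Sm + sm)
          = projL Sp * projL Sm + projL Sp * sm + (sp * projL Sm + sp * sm) := by noncomm_ring
      rw [expand, hPpPm, hPpsm, fsp_Pm0, hspsm]
      abel
    have hQmQp : (projL Sm + sm) * (projL Sp + sp) = 0 := by
      have expand : (projL Sm + sm) * (projL Sp + sp)
          = projL Sm * projL Sp + projL Sm * sp + (sm * projL Sp + sm * sp) := by noncomm_ring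
      rw [expand, hPmPp, hPmsp, fsm_Pp0, hsmsp]
      abel
    -- the projection onto S
    have hQ2 : ((projL Sp + sp) + (projL Sm + sm)) * ((projL Sp + sp) + (projL Sm + sm))
        = (projL Sp + sp) + (projL Sm + sm) := by
      have expand : ((projL Sp + sp) + (projL Sm + sm)) * ((projL Sp + sp) + (projL Sm + sm))
          = (projL Sp + sp) * (projL Sp + sp) + (projL Sp + sp) * (projL Sm + sm)
            + ((projL Sm + sm) * (projL Sp + sp) + (projL Sm + sm) * (projL Sm + sm)) := by
        noncomm_ring
      rw [expand, hQp2, hQm2, hQpQm, hQmQp]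
      abel
    have hQr : LinearMap.range (((projL Sp + sp) + (projL Sm + sm)) : H →ₗ[ℂ] H) = S := by
      apply le_antisymm
      · rintro _ ⟨x, rfl⟩
        rw [← ContinuousLinearMap.coe_add, ← ContinuousLinearMap.coe_add, ← ContinuousLinearMap.coe_add, ContinuousLinearMap.coe_coe, add_apply]
        have m1 : (projL Sp + sp) x ∈ Sp :=
          (le_of_eq hQpr) (LinearMap.mem_range_self (_ : H →ₗ[ℂ] H) x)
        have m2 : (projL Sm + sm) x ∈ Sm :=
          (le_of_eq hQmr) (LinearMap.mem_range_self (_ : H →ₗ[ℂ] H) x)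
        exact Submodule.add_mem S (hSpS m1) (hSmS m2)
      · intro t ht
        obtain ⟨tp, htp, tm, htm, rfl⟩ := Submodule.mem_sup.mp (show t ∈ Sp ⊔ Sm from hsup ▸ ht)
        refine ⟨tp + tm, ?_⟩
        have e1 : (projL Sp + sp) tp = tp := by
          have := hQp2 --
          have e1a : projL Sp tp = tp := projL_eq_self htp
          have e1b : sp tp = 0 := by
            rw [hsp, mul_apply_eq_comp, sub_apply, one_apply_eq_self, projL_eq_self (hSpS htp), sub_self,
              map_zero]
          rw [add_apply, e1a, e1b, add_zero]
        have e2 : (projL Sm + sm) tp = 0 := by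
          have e2a : projL Sm tp = 0 := projL_eq_zero (hSpSm htp)
          have e2b : sm tp = 0 := by
            rw [hsm, mul_apply_eq_comp, sub_apply, one_apply_eq_self, projL_eq_self (hSpS htp), sub_self,
              map_zero]
          rw [add_apply, e2a, e2b, add_zero]
        have e3 : (projL Sm + sm) tm = tm := by
          have e3a : projL Sm tm = tm := projL_eq_self htm
          have e3b : sm tm = 0 := by
            rw [hsm, mul_apply_eq_comp, sub_apply, one_apply_eq_self, projL_eq_self (hSmS htm), sub_self,
              map_zero]
          rw [add_apply, e3a, e3b, add_zero]
        have e4 : (projL Sp + sp) tm = 0 := by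
          have e4a : projL Sp tm = 0 := projL_eq_zero (hSmSp htm)
          have e4b : sp tm = 0 := by
            rw [hsp, mul_apply_eq_comp, sub_apply, one_apply_eq_self, projL_eq_self (hSmS htm), sub_self,
              map_zero]
          rw [add_apply, e4a, e4b, add_zero]
        rw [← ContinuousLinearMap.coe_add, ← ContinuousLinearMap.coe_add, ← ContinuousLinearMap.coe_add, ContinuousLinearMap.coe_coe, add_apply, map_add, map_add, e1, e2, e3, e4]
        abel
    have hQB : B * ((projL Sp + sp) + (projL Sm + sm))
        = adjoint ((projL Sp + sp) + (projL Sm + sm)) * B := by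
      rw [mul_add, hQpB, hQmB,
        show adjoint ((projL Sp + sp) + (projL Sm + sm))
          = adjoint (projL Sp + sp) + adjoint (projL Sm + sm) from map_add adjoint _ _, add_mul]
    refine ⟨(projL Sp + sp) + (projL Sm + sm), projL Sp + sp, projL Sm + sm,
      ⟨hQ2, hQr, hQB⟩, ⟨hQp2, hQpr, hQpB⟩, ⟨hQm2, hQmr, hQmB⟩, rfl, ?_, hQpQm, hQmQp⟩
    intro x hx y hy
    rw [ContinuousLinearMap.coe_add, hQpr] at hx
    rw [ContinuousLinearMap.coe_add, hQmr] at hy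
    exact horth x hx y hy
  exact ⟨claim1, ⟨fun h => ⟨hwc_of_i h, hschur_p h, hschur_m h⟩,
    fun h => hiii_to_i h.1 h.2.1 h.2.2⟩, hpart3⟩
end
end

section
/- Let B be a bounded selfadjoint operator on a complex Hilbert space H and S a closed subspace of H such that B is S-complementable (hence also S-weakly complementable). Then for every Q ∈ P(B,S): B_{/S} = B(I − Q) = (I − Q)*B. -/
open ContinuousLinearMap

noncomputable section

variable {H : Type*} [NormedAddCommGroup H] [InnerProductSpace ℂ H] [CompleteSpace H]

set_option synthInstance.maxHeartbeats 1000000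
set_option maxHeartbeats 2000000

namespace Stmt10Aux

lemma orthRange (T : H →L[ℂ] H) (hT : IsSelfAdjoint T) :
    (LinearMap.range (T : H →ₗ[ℂ] H))ᗮ = LinearMap.ker (T : H →ₗ[ℂ] H) := by
  ext x
  constructor
  · intro hx
    have h : ∀ y : H, (inner ℂ (T y) x : ℂ) = 0 := fun y =>
      (Submodule.mem_orthogonal _ x).mp hx (T y) ⟨y, rfl⟩
    have h2 : (inner ℂ (T x) (T x) : ℂ) = 0 := by
      have := h x
      calc (inner ℂ (T x) (T x) : ℂ) = inner ℂ x (T (T x)) := hT.isSymmetric _ _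
        _ = 0 := by
            rw [← inner_conj_symm]
            rw [show (inner ℂ (T (T x)) x : ℂ) = 0 from h (T x)]
            simp
    simpa [LinearMap.mem_ker] using inner_self_eq_zero.mp h2
  · intro hx
    rw [Submodule.mem_orthogonal]
    rintro u ⟨y, rfl⟩
    have hx0 : T x = 0 := hx
    calc (inner ℂ (T y) x : ℂ) = inner ℂ y (T x) := hT.isSymmetric _ _
      _ = 0 := by rw [hx0]; simp

lemma closRange (T : H →L[ℂ] H) (hT : IsSelfAdjoint T) :
    (LinearMap.range (T : H →ₗ[ℂ] H)).topologicalClosure = (LinearMap.ker (T : H →ₗ[ℂ] H))ᗮ := by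
  rw [← orthRange T hT, Submodule.orthogonal_orthogonal_eq_closure]

lemma kerMulSelf (T : H →L[ℂ] H) (hT : IsSelfAdjoint T) :
    LinearMap.ker ((T * T : H →L[ℂ] H) : H →ₗ[ℂ] H) = LinearMap.ker (T : H →ₗ[ℂ] H) := by
  ext x
  simp only [LinearMap.mem_ker, ContinuousLinearMap.coe_coe, mul_apply_eq_comp]
  constructor
  · intro h
    have h2 : (inner ℂ (T x) (T x) : ℂ) = 0 := by
      calc (inner ℂ (T x) (T x) : ℂ) = inner ℂ x (T (T x)) := hT.isSymmetric _ _
        _ = 0 := by rw [h]; simp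
    exact inner_self_eq_zero.mp h2
  · intro h; rw [h]; simp

lemma rangeMemOrthKer (T : H →L[ℂ] H) (hT : IsSelfAdjoint T) (x : H) :
    T x ∈ (LinearMap.ker (T : H →ₗ[ℂ] H))ᗮ := by
  rw [Submodule.mem_orthogonal]
  intro v hv
  have hv0 : T v = 0 := hv
  calc (inner ℂ v (T x) : ℂ) = inner ℂ (T v) x := (hT.isSymmetric v x).symm
    _ = 0 := by rw [hv0]; simp

lemma eqOn_decomp (T T' : H →L[ℂ] H) (K : Submodule ℂ H) (hK : IsClosed (K : Set H))
    (h1 : ∀ x ∈ K, T x = T' x) (h2 : ∀ x ∈ Kᗮ, T x = T' x) : T = T' := by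
  haveI : CompleteSpace K := hK.completeSpace_coe
  ext x
  have hd : x = K.starProjection x + (x - K.starProjection x) := by abel
  rw [hd, map_add, map_add, h1 _ (K.starProjection_apply_mem x),
    h2 _ (K.sub_starProjection_mem_orthogonal x)]


/-- the canonical `|a|^{1/2}` via cfc -/
def sqrtAbs (a : H →L[ℂ] H) : H →L[ℂ] H := cfc (fun t : ℝ => Real.sqrt |t|) a

lemma sqrtAbs_mul_self (a : H →L[ℂ] H) (ha : IsSelfAdjoint a) :
    sqrtAbs a * sqrtAbs a = cfc (fun t : ℝ => |t|) a := by
  rw [sqrtAbs, ← cfc_mul _ _ a]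
  exact cfc_congr fun t _ => Real.mul_self_sqrt (abs_nonneg t)

lemma sqrtAbs_nonneg (a : H →L[ℂ] H) : 0 ≤ sqrtAbs a :=
  cfc_nonneg fun t _ => Real.sqrt_nonneg _

lemma abs_mul_abs (a : H →L[ℂ] H) (ha : IsSelfAdjoint a) :
    cfc (fun t : ℝ => |t|) a * cfc (fun t : ℝ => |t|) a = a * a := by
  rw [← cfc_mul _ _ a]
  calc cfc (fun t : ℝ => |t| * |t|) a = cfc (fun t : ℝ => (id t) * (id t)) a :=
        cfc_congr fun t _ => abs_mul_abs_self t
    _ = cfc (id : ℝ → ℝ) a * cfc (id : ℝ → ℝ) a := cfc_mul _ _ a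
    _ = a * a := by rw [cfc_id ℝ a]

/-- Uniqueness: any positive 4th root of `a * a` is `sqrtAbs a`. -/
lemma eq_sqrtAbs (a m : H →L[ℂ] H) (ha : IsSelfAdjoint a) (hm : m.IsPositive)
    (h4 : m ^ 4 = a * a) : m = sqrtAbs a := by
  have hm0 : 0 ≤ m := (nonneg_iff_isPositive m).mpr hm
  have hmm0 : 0 ≤ m * m := by
    have : m * m = star m * m := by rw [hm.isSelfAdjoint]
    rw [this]; exact star_mul_self_nonneg m
  have habs0 : 0 ≤ cfc (fun t : ℝ => |t|) a := cfc_nonneg fun t _ => abs_nonneg t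
  have h1 : CFC.sqrt (a * a) = m * m := by
    apply CFC.sqrt_unique _ hmm0
    calc (m * m) * (m * m) = m ^ 4 := by noncomm_ring
      _ = a * a := h4
  have h2 : CFC.sqrt (a * a) = cfc (fun t : ℝ => |t|) a := by
    apply CFC.sqrt_unique _ habs0
    exact abs_mul_abs a ha
  have h3 : m * m = sqrtAbs a * sqrtAbs a := by
    rw [sqrtAbs_mul_self a ha, ← h2, h1]
  have h5 : CFC.sqrt (m * m) = m := CFC.sqrt_unique rfl hm0
  have h6 : CFC.sqrt (m * m) = sqrtAbs a := by
    rw [h3]; exact CFC.sqrt_unique rfl (sqrtAbs_nonneg a)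
  rw [← h5, h6]

lemma commute_sqrtAbs (a : H →L[ℂ] H) (ha : IsSelfAdjoint a) :
    a * sqrtAbs a = sqrtAbs a * a := by
  have := cfc_commute_cfc (id : ℝ → ℝ) (fun t : ℝ => Real.sqrt |t|) a
  rw [cfc_id ℝ a] at this
  exact this.eq

/-- signed square root, written in a form that is obviously continuous -/
def signedSqrt : ℝ → ℝ := fun t => Real.sqrt (max t 0) - Real.sqrt (max (-t) 0)

lemma continuous_signedSqrt : Continuous signedSqrt := by
  unfold signedSqrt
  fun_prop

lemma sqrtAbs_mul_signedSqrt (a : H →L[ℂ] H) (ha : IsSelfAdjoint a) :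
    sqrtAbs a * cfc signedSqrt a = a := by
  rw [sqrtAbs, ← cfc_mul _ _ a (by fun_prop) continuous_signedSqrt.continuousOn]
  calc cfc (fun t : ℝ => Real.sqrt |t| * signedSqrt t) a = cfc (id : ℝ → ℝ) a := by
        apply cfc_congr
        intro t _
        show Real.sqrt |t| * (Real.sqrt (max t 0) - Real.sqrt (max (-t) 0)) = t
        rcases le_or_gt 0 t with h | h
        · rw [abs_of_nonneg h, max_eq_left h, max_eq_right (neg_nonpos.mpr h), Real.sqrt_zero,
            sub_zero, Real.mul_self_sqrt h]
        · rw [abs_of_neg h, max_eq_right h.le, max_eq_left (neg_nonneg.mpr h.le), Real.sqrt_zero,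
            zero_sub, mul_neg, Real.mul_self_sqrt (neg_nonneg.mpr h.le), neg_neg]
    _ = a := cfc_id ℝ a


lemma partial_isometry_adj (a u : H →L[ℂ] H)
    (hku : LinearMap.ker (u : H →ₗ[ℂ] H) = LinearMap.ker (a : H →ₗ[ℂ] H))
    (hiso : ∀ x ∈ (LinearMap.ker (a : H →ₗ[ℂ] H))ᗮ, ‖u x‖ = ‖x‖) :
    ∀ x ∈ (LinearMap.ker (a : H →ₗ[ℂ] H))ᗮ, adjoint u (u x) = x := by
  set K : Submodule ℂ H := (LinearMap.ker (a : H →ₗ[ℂ] H))ᗮ with hK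
  haveI : CompleteSpace (LinearMap.ker (a : H →ₗ[ℂ] H) : Submodule ℂ H) :=
    (ContinuousLinearMap.isClosed_ker a).completeSpace_coe
  let J : K →ₗᵢ[ℂ] H :=
    { toLinearMap := (u : H →ₗ[ℂ] H).comp K.subtype
      norm_map' := fun x => hiso x x.2 }
  have hJ : ∀ x y : K, (inner ℂ (u (x : H)) (u (y : H)) : ℂ) = inner ℂ (x : H) (y : H) :=
    fun x y => J.inner_map_map x y
  intro x hx
  apply ext_inner_right ℂ
  intro y
  rw [adjoint_inner_left]
  set y₁ : H := (LinearMap.ker (a : H →ₗ[ℂ] H)).starProjection y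
  have hy₁ : y₁ ∈ LinearMap.ker (a : H →ₗ[ℂ] H) := Submodule.starProjection_apply_mem _ _
  have hy₂ : y - y₁ ∈ K := Submodule.sub_starProjection_mem_orthogonal y
  have hdecomp : y = y₁ + (y - y₁) := by abel
  have huy₁ : u y₁ = 0 := by
    have : y₁ ∈ LinearMap.ker (u : H →ₗ[ℂ] H) := hku ▸ hy₁
    exact this
  have hxy₁ : (inner ℂ x y₁ : ℂ) = 0 := (Submodule.mem_orthogonal' _ _).mp hx y₁ hy₁
  calc (inner ℂ (u x) (u y) : ℂ) = inner ℂ (u x) (u y₁ + u (y - y₁)) := by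
        rw [← map_add]; rw [← hdecomp]
    _ = inner ℂ (u x) (u (y - y₁)) := by rw [huy₁, zero_add]
    _ = inner ℂ x (y - y₁) := hJ ⟨x, hx⟩ ⟨y - y₁, hy₂⟩
    _ = inner ℂ x y := by rw [inner_sub_right, hxy₁, sub_zero]

lemma key (a m u f b q : H →L[ℂ] H)
    (ha : IsSelfAdjoint a) (hm : m.IsPositive) (h4 : m ^ 4 = a * a)
    (hku : LinearMap.ker (u : H →ₗ[ℂ] H) = LinearMap.ker (a : H →ₗ[ℂ] H))
    (hiso : ∀ x ∈ (LinearMap.ker (a : H →ₗ[ℂ] H))ᗮ, ‖u x‖ = ‖x‖)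
    (hum2 : a = u * m ^ 2)
    (hmf : m * f = b)
    (hrf : LinearMap.range (f : H →ₗ[ℂ] H) ≤ (LinearMap.range (m : H →ₗ[ℂ] H)).topologicalClosure)
    (haq : a * q = b) :
    adjoint f * (u * f) = adjoint f * (m * q) := by
  have hmsa : IsSelfAdjoint m := hm.isSelfAdjoint
  have hmmsa : IsSelfAdjoint (m * m) := by
    rw [IsSelfAdjoint, star_mul, hmsa.star_eq]
  have hkerm : LinearMap.ker (m : H →ₗ[ℂ] H) = LinearMap.ker (a : H →ₗ[ℂ] H) := by
    rw [← kerMulSelf m hmsa, ← kerMulSelf (m * m) hmmsa]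
    have : (m * m) * (m * m) = a * a := by rw [← h4]; noncomm_ring
    rw [this, kerMulSelf a ha]
  -- range f lives in (ker m)ᗮ and in the closure of range (m*m)
  have hfKp : ∀ x, f x ∈ (LinearMap.ker (m : H →ₗ[ℂ] H))ᗮ := by
    intro x
    have h1 := hrf ⟨x, rfl⟩
    rwa [closRange m hmsa] at h1
  have hclos2 : (LinearMap.range ((m * m : H →L[ℂ] H) : H →ₗ[ℂ] H)).topologicalClosure = (LinearMap.ker (m : H →ₗ[ℂ] H))ᗮ := by
    rw [closRange (m * m) hmmsa, kerMulSelf m hmsa]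
  have hfC2 : ∀ x, f x ∈ (LinearMap.range ((m * m : H →L[ℂ] H) : H →ₗ[ℂ] H)).topologicalClosure := by
    intro x; rw [hclos2]; exact hfKp x
  -- commutation
  have hcomm : a * m = m * a := by
    rw [eq_sqrtAbs a m ha hm h4]
    exact commute_sqrtAbs a ha
  have e1 : u * (m * m) = a := by rw [hum2, pow_two]
  have hum : u * m = m * u := by
    apply eqOn_decomp _ _ (LinearMap.ker (m : H →ₗ[ℂ] H)) (ContinuousLinearMap.isClosed_ker m)
    · intro x hxm
      have hxu : u x = 0 := by
        have : x ∈ LinearMap.ker (u : H →ₗ[ℂ] H) := by rw [hku, ← hkerm]; exact hxm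
        exact this
      have hxm0 : m x = 0 := hxm
      simp [mul_apply_eq_comp, hxu, hxm0]
    · intro x hx
      have hx2 : x ∈ (LinearMap.range ((m * m : H →L[ℂ] H) : H →ₗ[ℂ] H)).topologicalClosure := by
        rw [hclos2]; exact hx
      have hsub : (LinearMap.range ((m * m : H →L[ℂ] H) : H →ₗ[ℂ] H)).topologicalClosure
          ≤ LinearMap.ker ((u * m - m * u : H →L[ℂ] H) : H →ₗ[ℂ] H) := by
        apply Submodule.topologicalClosure_minimal
        · rintro _ ⟨z, rfl⟩
          have h1 : (u * m) ((m * m) z) = a (m z) := by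
            have := congrFun (congrArg (fun (T : H →L[ℂ] H) => (T : H → H)) e1) (m z)
            simpa [mul_apply_eq_comp] using this
          have h2 : (m * u) ((m * m) z) = m (a z) := by
            have := congrFun (congrArg (fun (T : H →L[ℂ] H) => (T : H → H)) e1) z
            simp only [mul_apply_eq_comp] at this ⊢
            rw [this]
          have h3 : a (m z) = m (a z) := by
            have := congrFun (congrArg (fun (T : H →L[ℂ] H) => (T : H → H)) hcomm) z
            simpa [mul_apply_eq_comp] using this
          simp only [LinearMap.mem_ker, ContinuousLinearMap.coe_coe, sub_apply]
          rw [h1, h2, h3, sub_self]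
        · exact ContinuousLinearMap.isClosed_ker _
      have := hsub hx2
      have h0 : (u * m - m * u) x = 0 := this
      rw [sub_apply] at h0
      exact sub_eq_zero.mp h0
  have hum' : adjoint u * m = m * adjoint u := by
    have := congrArg star hum
    rw [star_mul, star_mul, hmsa.star_eq, star_eq_adjoint] at this
    exact this.symm
  have estar : adjoint u * (m * m) = a := by
    have h1 : adjoint u * (m * m) = (m * m) * adjoint u := by
      rw [← mul_assoc, hum', mul_assoc, hum', mul_assoc]
    have h2 : (m * m) * adjoint u = a := by
      have := congrArg star e1
      rw [star_mul, star_mul, hmsa.star_eq, star_eq_adjoint, ha.star_eq] at this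
      exact this
    rw [h1, h2]
  have huu := partial_isometry_adj a u hku hiso
  -- u and adjoint u agree on range f
  have husf : ∀ x, u (f x) = adjoint u (f x) := by
    intro x
    have hsub : (LinearMap.range ((m * m : H →L[ℂ] H) : H →ₗ[ℂ] H)).topologicalClosure
        ≤ LinearMap.ker ((u - adjoint u : H →L[ℂ] H) : H →ₗ[ℂ] H) := by
      apply Submodule.topologicalClosure_minimal
      · rintro _ ⟨z, rfl⟩
        have h1 : u ((m * m) z) = a z := by
          have := congrFun (congrArg (fun (T : H →L[ℂ] H) => (T : H → H)) e1) z
          simpa [mul_apply_eq_comp] using this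
        have h2 : adjoint u ((m * m) z) = a z := by
          have := congrFun (congrArg (fun (T : H →L[ℂ] H) => (T : H → H)) estar) z
          simpa [mul_apply_eq_comp] using this
        simp only [LinearMap.mem_ker, ContinuousLinearMap.coe_coe, sub_apply]
        rw [h1, h2, sub_self]
      · exact ContinuousLinearMap.isClosed_ker _
    have h0 : (u - adjoint u) (f x) = 0 := hsub (hfC2 x)
    rw [sub_apply] at h0
    exact sub_eq_zero.mp h0
  -- m ∘ (adjoint u ∘ f) = m ∘ (m ∘ q)
  have hmd : ∀ x, m (adjoint u (f x)) = m (m (q x)) := by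
    intro x
    have s1 : m (adjoint u (f x)) = adjoint u (m (f x)) := by
      have := congrFun (congrArg (fun (T : H →L[ℂ] H) => (T : H → H)) hum') (f x)
      simpa [mul_apply_eq_comp] using this.symm
    have s2 : m (f x) = b x := by
      have := congrFun (congrArg (fun (T : H →L[ℂ] H) => (T : H → H)) hmf) x
      simpa [mul_apply_eq_comp] using this
    have s3 : b x = a (q x) := by
      have := congrFun (congrArg (fun (T : H →L[ℂ] H) => (T : H → H)) haq) x
      simp only [mul_apply_eq_comp] at this
      exact this.symm
    have s4 : a (q x) = u ((m * m) (q x)) := by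
      have := congrFun (congrArg (fun (T : H →L[ℂ] H) => (T : H → H)) e1) (q x)
      simp only [mul_apply_eq_comp] at this
      exact this.symm
    have s5 : (m * m) (q x) ∈ (LinearMap.ker (a : H →ₗ[ℂ] H))ᗮ := by
      rw [← hkerm]
      have := rangeMemOrthKer (m * m) hmmsa (q x)
      rwa [kerMulSelf m hmsa] at this
    have s6 : adjoint u (u ((m * m) (q x))) = (m * m) (q x) := huu _ s5
    rw [s1, s2, s3, s4, s6]
    simp [mul_apply_eq_comp]
  -- conclude
  ext x
  simp only [mul_apply_eq_comp]
  rw [husf x]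
  have hv : adjoint u (f x) - m (q x) ∈ LinearMap.ker (m : H →ₗ[ℂ] H) := by
    have : m (adjoint u (f x) - m (q x)) = 0 := by
      rw [map_sub, hmd x, sub_self]
    exact this
  have hzero : adjoint f (adjoint u (f x) - m (q x)) = 0 := by
    apply ext_inner_right ℂ
    intro y
    rw [adjoint_inner_left, inner_zero_left]
    have := (Submodule.mem_orthogonal _ _).mp (hfKp y) _ hv
    exact this
  have := congrArg (fun z => adjoint f z) (sub_add_cancel (adjoint u (f x)) (m (q x)))
  calc adjoint f (adjoint u (f x))
      = adjoint f ((adjoint u (f x) - m (q x)) + m (q x)) := by rw [sub_add_cancel]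
    _ = adjoint f (adjoint u (f x) - m (q x)) + adjoint f (m (q x)) := map_add _ _ _
    _ = adjoint f (m (q x)) := by rw [hzero, zero_add]

lemma exists_proj (B : H →L[ℂ] H) (S : Submodule ℂ H) [CompleteSpace S]
    (hc : S ⊔ Sᗮ.comap (B : H →ₗ[ℂ] H) = ⊤) :
    ∃ Q0 : H →L[ℂ] H, (∀ x ∈ S, Q0 x = x) ∧ (∀ x, Q0 x ∈ S) ∧ (∀ x, B (x - Q0 x) ∈ Sᗮ) := by
  set M : Submodule ℂ H := Sᗮ.comap (B : H →ₗ[ℂ] H) with hM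
  have hMc : IsClosed (M : Set H) := by
    have : (M : Set H) = ⇑B ⁻¹' (Sᗮ : Set H) := rfl
    rw [this]
    exact (Submodule.isClosed_orthogonal S).preimage B.continuous
  have hSc : IsClosed (S : Set H) :=
    (completeSpace_coe_iff_isComplete.mp (inferInstance : CompleteSpace S)).isClosed
  set K0 : Submodule ℂ H := S ⊓ M with hK0
  have hK0c : IsClosed (K0 : Set H) := by
    rw [hK0, Submodule.coe_inf]
    exact hSc.inter hMc
  set N : Submodule ℂ H := M ⊓ K0ᗮ with hN
  have hNc : IsClosed (N : Set H) := by
    rw [hN, Submodule.coe_inf]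
    exact hMc.inter (Submodule.isClosed_orthogonal K0)
  have hdisj : Disjoint S N := by
    rw [Submodule.disjoint_def]
    intro x hxS hxN
    have hxK0 : x ∈ K0 := ⟨hxS, hxN.1⟩
    have := (Submodule.mem_orthogonal _ _).mp hxN.2 x hxK0
    exact inner_self_eq_zero.mp this
  have hcod : Codisjoint S N := by
    rw [codisjoint_iff, eq_top_iff]
    intro x _
    have hx : x ∈ S ⊔ M := by rw [hc]; trivial
    rw [Submodule.mem_sup] at hx
    obtain ⟨s, hs, mm, hmm, rfl⟩ := hx
    haveI : CompleteSpace K0 := hK0c.completeSpace_coe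
    set k : H := K0.starProjection mm with hk
    have hkK0 : k ∈ K0 := K0.starProjection_apply_mem mm
    have hk2 : mm - k ∈ K0ᗮ := K0.sub_starProjection_mem_orthogonal mm
    refine Submodule.mem_sup.mpr ⟨s + k, S.add_mem hs hkK0.1, mm - k, ⟨M.sub_mem hmm hkK0.2, hk2⟩, ?_⟩
    abel
  have hcompl : IsCompl S N := ⟨hdisj, hcod⟩
  set Q0 : H →L[ℂ] H := S.subtypeL.comp (S.linearProjOfClosedCompl N hcompl hSc hNc) with hQ0
  have hQ0left : ∀ x ∈ S, Q0 x = x := by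
    intro x hx
    have : S.linearProjOfClosedCompl N hcompl hSc hNc x = ⟨x, hx⟩ := by
      rw [Submodule.coe_continuous_linearProjOfClosedCompl']
      exact Submodule.linearProjOfIsCompl_apply_left hcompl ⟨x, hx⟩
    show (S.linearProjOfClosedCompl N hcompl hSc hNc x : H) = x
    rw [this]
  have hQ0right : ∀ x ∈ N, Q0 x = 0 := by
    intro x hx
    have : S.linearProjOfClosedCompl N hcompl hSc hNc x = 0 := by
      rw [Submodule.coe_continuous_linearProjOfClosedCompl']
      exact Submodule.linearProjOfIsCompl_apply_right hcompl ⟨x, hx⟩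
    show (S.linearProjOfClosedCompl N hcompl hSc hNc x : H) = 0
    rw [this]; rfl
  have hQ0mem : ∀ x, Q0 x ∈ S := fun x => Submodule.coe_mem _
  have hsubN : ∀ x, x - Q0 x ∈ N := by
    intro x
    have hx : x ∈ S ⊔ N := by rw [codisjoint_iff.mp hcod]; trivial
    rw [Submodule.mem_sup] at hx
    obtain ⟨s, hs, n, hn, rfl⟩ := hx
    have : Q0 (s + n) = s := by
      rw [map_add, hQ0left s hs, hQ0right n hn, add_zero]
    rw [this]
    simpa using hn
  refine ⟨Q0, hQ0left, hQ0mem, fun x => ?_⟩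
  have := (hsubN x).1
  exact this
end Stmt10Aux


/-- If `B` is `S`-complementable (hence `S`-weakly complementable), then
`B_{/S} = B(I - Q) = (I - Q)⋆B` for every `Q ∈ P(B,S)`. -/
theorem stmt_10 (B : H →L[ℂ] H) (hB : IsSelfAdjoint B)
    (S : Submodule ℂ H) [CompleteSpace S] (hc : IsComplementable B S) :
    IsWeaklyComplementable B S ∧
    ∀ Y, IsSchur B S Y → ∀ Q ∈ projSet B S,
      Y = B * (1 - Q) ∧ Y = adjoint (1 - Q) * B := by
  set P : H →L[ℂ] H := projL S with hPdef
  have hPsa : IsSelfAdjoint P := isSelfAdjoint_starProjection S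
  have hPmem : ∀ x, P x ∈ S := fun x => S.starProjection_apply_mem x
  have hPid : ∀ x ∈ S, P x = x := fun x hx => by
    exact Submodule.starProjection_eq_self_iff.mpr hx
  have hPzero : ∀ x ∈ Sᗮ, P x = 0 := fun x hx => by
    show ((S.orthogonalProjectionOnto x : S) : H) = 0
    rw [Submodule.orthogonalProjectionOnto_apply_of_mem_orthogonal hx]
    rfl
  have ha_def : blockA B S = P * B * P := rfl
  have hb_def : blockB B S = P * B * (1 - P) := rfl
  have hc_def : blockC B S = (1 - P) * B * (1 - P) := rfl
  set a : H →L[ℂ] H := blockA B S with haS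
  set b : H →L[ℂ] H := blockB B S with hbS
  set c : H →L[ℂ] H := blockC B S with hcS
  have hasa : IsSelfAdjoint a := by
    rw [ha_def, IsSelfAdjoint, star_mul, star_mul, hPsa.star_eq, hB.star_eq, mul_assoc]
  have hadj_a : adjoint a = a := by rw [← star_eq_adjoint, hasa.star_eq]
  -- Part 1
  obtain ⟨Q0, hQ0left, hQ0mem, hQ0B⟩ := Stmt10Aux.exists_proj B S hc
  have haq0 : a * (Q0 * (1 - P)) = b := by
    ext x
    simp only [mul_apply_eq_comp, ha_def, hb_def, sub_apply, one_apply_eq_self]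
    set y : H := x - P x with hy
    have h1 : P (Q0 y) = Q0 y := hPid _ (hQ0mem y)
    rw [h1]
    have h2 : P (B y - B (Q0 y)) = 0 := by
      rw [(map_sub B y (Q0 y)).symm]
      exact hPzero _ (hQ0B y)
    have h3 : P (B (Q0 y)) = P (B y) := by
      rw [map_sub] at h2
      exact (sub_eq_zero.mp h2).symm
    rw [h3]
  have hm0pos : (Stmt10Aux.sqrtAbs a).IsPositive :=
    (nonneg_iff_isPositive _).mp (Stmt10Aux.sqrtAbs_nonneg a)
  have hm04 : (Stmt10Aux.sqrtAbs a) ^ 4 = adjoint a * a := by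
    rw [hadj_a]
    have h1 : (Stmt10Aux.sqrtAbs a) ^ 4
        = (Stmt10Aux.sqrtAbs a * Stmt10Aux.sqrtAbs a) *
          (Stmt10Aux.sqrtAbs a * Stmt10Aux.sqrtAbs a) := by
      noncomm_ring
    rw [h1, Stmt10Aux.sqrtAbs_mul_self a hasa, Stmt10Aux.abs_mul_abs a hasa]
  have hpart1 : IsWeaklyComplementable B S := by
    refine ⟨Stmt10Aux.sqrtAbs a, ⟨hm0pos, hm04⟩, ?_⟩
    rintro _ ⟨x, rfl⟩
    have hfact : a = Stmt10Aux.sqrtAbs a * cfc Stmt10Aux.signedSqrt a :=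
      (Stmt10Aux.sqrtAbs_mul_signedSqrt a hasa).symm
    have hbop : b = Stmt10Aux.sqrtAbs a * (cfc Stmt10Aux.signedSqrt a * (Q0 * (1 - P))) := by
      conv_lhs => rw [← haq0, hfact]
      rw [mul_assoc]
    exact ⟨(cfc Stmt10Aux.signedSqrt a * (Q0 * (1 - P))) x, by rw [← hbS, hbop]; rfl⟩
  refine ⟨hpart1, ?_⟩
  -- Part 2
  rintro Y ⟨m, u, f, ⟨hmpos, hm4⟩, hku, hiso, hum2, hmf, hrf, hYeq⟩ Q ⟨hQ2, hQr, hQB⟩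
  have hm4' : m ^ 4 = a * a := by rw [hm4, hadj_a]
  have hPQ : P * Q = Q := by
    ext x
    simp only [mul_apply_eq_comp]
    exact hPid _ (hQr ▸ LinearMap.mem_range_self _ x)
  have hQP : Q * P = P := by
    ext x
    simp only [mul_apply_eq_comp]
    have hPx : P x ∈ LinearMap.range (Q : H →ₗ[ℂ] H) := hQr.symm ▸ hPmem x
    obtain ⟨y, hy⟩ := hPx
    rw [← hy]
    have := congrFun (congrArg (fun (T : H →L[ℂ] H) => (T : H → H)) hQ2) y
    simpa [mul_apply_eq_comp] using this
  have hPQ' : P * adjoint Q = P := by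
    have := congrArg star hQP
    rw [star_mul, hPsa.star_eq, star_eq_adjoint] at this
    exact this
  have hPBQ : P * B * Q = P * B := by
    rw [mul_assoc, hQB, ← mul_assoc, hPQ']
  have hstepA : a * (Q * (1 - P)) = b := by
    have h1 : a * (Q * (1 - P)) = (P * B) * (P * Q) * (1 - P) := by
      rw [ha_def]; noncomm_ring
    rw [h1, hPQ, hPBQ, hb_def]
  have hkey := Stmt10Aux.key a m u f b (Q * (1 - P)) hasa hmpos hm4' hku hiso hum2 hmf hrf hstepA
  have hfm : adjoint f * m = adjoint b := by
    have := congrArg star hmf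
    rw [star_mul, hmpos.isSelfAdjoint.star_eq, star_eq_adjoint, star_eq_adjoint] at this
    exact this
  have hbadj : adjoint b = (1 - P) * B * P := by
    rw [← star_eq_adjoint, hb_def, star_mul, star_mul, star_sub, star_one, hPsa.star_eq,
      hB.star_eq, ← mul_assoc]
  have hL : P * (B - B * Q) = 0 := by rw [mul_sub, ← mul_assoc, hPBQ, sub_self]
  have hR : (B - B * Q) * P = 0 := by rw [sub_mul, mul_assoc, hQP, sub_self]
  have hX1 : (1 - P) * (B - B * Q) = B - B * Q := by rw [sub_mul, one_mul, hL, sub_zero]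
  have hX2 : (B - B * Q) * (1 - P) = B - B * Q := by rw [mul_sub, mul_one, hR, sub_zero]
  have hmain : c - adjoint b * (Q * (1 - P)) = B - B * Q := by
    have e0 : adjoint b * (Q * (1 - P)) = ((1 - P) * B) * (P * Q) * (1 - P) := by
      rw [hbadj]; noncomm_ring
    rw [e0, hPQ, hc_def]
    calc (1 - P) * B * (1 - P) - ((1 - P) * B) * Q * (1 - P)
        = (1 - P) * (B - B * Q) * (1 - P) := by noncomm_ring
      _ = B - B * Q := by rw [hX1, hX2]
  have hfirst : Y = B * (1 - Q) := by
    calc Y = c - adjoint f * (u * f) := hYeq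
      _ = c - adjoint f * (m * (Q * (1 - P))) := by rw [hkey]
      _ = c - adjoint b * (Q * (1 - P)) := by rw [← mul_assoc, hfm]
      _ = B - B * Q := hmain
      _ = B * (1 - Q) := by rw [mul_sub, mul_one]
  have hQadj : adjoint (1 - Q) = 1 - adjoint Q := by
    rw [← star_eq_adjoint, star_sub, star_one, star_eq_adjoint]
  have hsecond : Y = adjoint (1 - Q) * B := by
    rw [hfirst, hQadj, sub_mul, one_mul, mul_sub, mul_one, hQB]
  exact ⟨hfirst, hsecond⟩
end
end

section
/- Let H be a complex Hilbert space, S a closed subspace, J a signature operator (J* = J, J² = I), and α ∈ L(H) positive and invertible with (αJ)² = I (so that J_α := αJ is another signature operator of the Krein space (H, [·,·])). Let W ∈ L(H) satisfy (JW)* = JW. Then H = S ∔ α(S^⊥) is a direct sum; let P denote the bounded idempotent with range S and kernel α(S^⊥), and set a' := P(αJW)P and b' := P(αJW)(I − P). If JW is S-weakly complementable, i.e., range(P_S (JW) P_{S^⊥}) ⊆ range(|P_S (JW) P_S|^{1/2}), then for every bounded operator m on H such that α⁻¹m is selfadjoint and positive and m⁴ = α a'* α⁻¹ a', one has range(b')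 ⊆ range(m); that is, αJW is S-weakly complementable with respect to the inner product ⟨x,y⟩_α := ⟨α⁻¹x, y⟩. -/
open ContinuousLinearMap

noncomputable section

variable {H : Type*} [NormedAddCommGroup H] [InnerProductSpace ℂ H] [CompleteSpace H]

set_option synthInstance.maxHeartbeats 1000000
set_option maxHeartbeats 4000000
set_option linter.unusedVariables false

private lemma aux_isUnit_of_sq {A : Type*} [Ring A] {a : A} (h : IsUnit (a * a)) : IsUnit a := by
  obtain ⟨u, hu⟩ := h
  have hu' : Commute a (u : A) := by
    rw [hu]; exact (Commute.refl a).mul_right (Commute.refl a)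
  have h1 : a * (a * ↑u⁻¹) = 1 := by rw [← mul_assoc, ← hu, u.mul_inv]
  refine isUnit_iff_exists.mpr ⟨a * ↑u⁻¹, h1, ?_⟩
  have h2 : (↑u⁻¹ : A) * a = a * ↑u⁻¹ := (hu'.units_inv_right).symm.eq
  rw [mul_assoc, h2, h1]

private lemma aux_smul_nonneg {y : H →L[ℂ] H} (hy : 0 ≤ y) {ε : ℝ} (hε : 0 ≤ ε) :
    0 ≤ (ε : ℂ) • y := by
  rw [ContinuousLinearMap.nonneg_iff_isPositive, ContinuousLinearMap.isPositive_def'] at hy ⊢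
  refine ⟨?_, fun u => ?_⟩
  · rw [IsSelfAdjoint, star_smul, hy.1.star_eq]
    simp [Complex.star_def, Complex.conj_ofReal]
  · have h2 := hy.2 u
    rw [ContinuousLinearMap.reApplyInnerSelf] at h2 ⊢
    rw [ContinuousLinearMap.smul_apply, inner_smul_left]
    simp only [Complex.conj_ofReal, RCLike.re_to_complex, Complex.mul_re, Complex.ofReal_re,
      Complex.ofReal_im, zero_mul, sub_zero]
    exact mul_nonneg hε (by simpa using h2)

private lemma aux_le_of_forall_eps {x y : H →L[ℂ] H} (hx : IsSelfAdjoint x)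
    (hy : IsSelfAdjoint y) (h : ∀ ε : ℝ, 0 < ε → x ≤ y + (ε : ℂ) • 1) : x ≤ y := by
  rw [ContinuousLinearMap.le_def, ContinuousLinearMap.isPositive_def']
  refine ⟨hy.sub hx, fun u => ?_⟩
  have key : ∀ ε : ℝ, 0 < ε → 0 ≤ (y - x).reApplyInnerSelf u + ε * ‖u‖ ^ 2 := by
    intro ε hε
    have h2 := (ContinuousLinearMap.le_def _ _ |>.mp (h ε hε)).2 u
    rw [ContinuousLinearMap.reApplyInnerSelf] at h2 ⊢
    have h3 : (y + (ε : ℂ) • 1 - x) u = (y - x) u + (ε : ℂ) • u := by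
      simp [ContinuousLinearMap.sub_apply, ContinuousLinearMap.add_apply]
      abel
    rw [h3, inner_add_left, inner_smul_left, map_add] at h2
    simp only [RCLike.re_to_complex, Complex.add_re, Complex.mul_re, Complex.conj_ofReal,
      Complex.ofReal_re, Complex.ofReal_im, zero_mul, sub_zero] at h2 ⊢
    have hnn : (inner ℂ u u : ℂ).re = ‖u‖ ^ 2 := by
      rw [← inner_self_eq_norm_sq (𝕜 := ℂ) u]; simp
    rw [hnn] at h2
    exact h2
  by_contra hcon
  push_neg at hcon
  set v := (y - x).reApplyInnerSelf u with hv
  have hc : (0:ℝ) < ‖u‖ ^ 2 + 1 := by positivity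
  have hεpos : 0 < -v / (‖u‖ ^ 2 + 1) := div_pos (by linarith) hc
  have h7 : 0 ≤ (v + -v / (‖u‖ ^ 2 + 1) * ‖u‖ ^ 2) * (‖u‖ ^ 2 + 1) :=
    mul_nonneg (key _ hεpos) hc.le
  have h8 : (v + -v / (‖u‖ ^ 2 + 1) * ‖u‖ ^ 2) * (‖u‖ ^ 2 + 1) = v := by
    field_simp; ring
  rw [h8] at h7; linarith

private lemma aux_le_of_sq_le_sq_unit {x y : H →L[ℂ] H} (hx : 0 ≤ x) (hy : 0 ≤ y)
    (hyu : IsUnit y) (h : x * x ≤ y * y) : x ≤ y := by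
  rcases subsingleton_or_nontrivial H with hH | hH
  · exact le_of_eq (Subsingleton.elim x y)
  have hr : (0:H →L[ℂ] H) ≤ CFC.sqrt y := CFC.sqrt_nonneg _
  set r := CFC.sqrt y with hr_def
  have hrr : r * r = y := CFC.sqrt_mul_sqrt_self y hy
  have hru : IsUnit r := aux_isUnit_of_sq (hrr.symm ▸ hyu)
  have hrsa : IsSelfAdjoint r := IsSelfAdjoint.of_nonneg hr
  have hysa : IsSelfAdjoint y := IsSelfAdjoint.of_nonneg hy
  have hxsa : IsSelfAdjoint x := IsSelfAdjoint.of_nonneg hx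
  set j := Ring.inverse r with hj_def
  have hjr : j * r = 1 := Ring.inverse_mul_cancel r hru
  have hrj : r * j = 1 := Ring.mul_inverse_cancel r hru
  have hjsa : star j = j := by
    have h1 : star j * r = 1 := by
      have h0 := congrArg star hrj
      rwa [star_mul, hrsa.star_eq, star_one] at h0
    calc star j = star j * (r * j) := by rw [hrj, mul_one]
    _ = (star j * r) * j := by rw [mul_assoc]
    _ = j := by rw [h1, one_mul]
  set yi := Ring.inverse y with hyi_def
  have hyiy : yi * y = 1 := Ring.inverse_mul_cancel y hyu
  have hyyi : y * yi = 1 := Ring.mul_inverse_cancel y hyu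
  have hyisa : star yi = yi := by
    have h1 : star yi * y = 1 := by
      have h0 := congrArg star hyyi
      rwa [star_mul, hysa.star_eq, star_one] at h0
    calc star yi = star yi * (y * yi) := by rw [hyyi, mul_one]
    _ = (star yi * y) * yi := by rw [mul_assoc]
    _ = yi := by rw [h1, one_mul]
  have hyi_jj : yi = j * j := by
    have h1 : y * (j * j) = 1 := by
      calc y * (j * j) = r * ((r * j) * j) := by rw [← hrr]; noncomm_ring
      _ = 1 := by rw [hrj, one_mul, hrj]
    calc yi = yi * (y * (j * j)) := by rw [h1, mul_one]
    _ = (yi * y) * (j * j) := by rw [mul_assoc]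
    _ = j * j := by rw [hyiy, one_mul]
  set w := x * yi with hw_def
  have hsw : star w = yi * x := by rw [hw_def, star_mul, hyisa, hxsa.star_eq]
  have hw1 : star w * w ≤ 1 := by
    have h2 : star yi * (x * x) * yi ≤ star yi * (y * y) * yi := star_left_conjugate_le_conjugate h yi
    have h3 : star yi * (y * y) * yi = 1 := by
      rw [hyisa]
      calc yi * (y * y) * yi = (yi * y) * (y * yi) := by noncomm_ring
      _ = 1 := by rw [hyiy, hyyi, one_mul]
    have h4 : star w * w = star yi * (x * x) * yi := by
      rw [hsw, hw_def, hyisa]; noncomm_ring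
    rw [h4, ← h3]; exact h2
  have hnw : ‖w‖ ≤ 1 := by
    have h5 : ‖star w * w‖ ≤ ‖(1 : H →L[ℂ] H)‖ :=
      CStarAlgebra.norm_le_norm_of_nonneg_of_le (star_mul_self_nonneg w) hw1
    have h6 : ‖(1 : H →L[ℂ] H)‖ ≤ 1 := ContinuousLinearMap.norm_id_le
    have h7 : ‖w‖ * ‖w‖ ≤ 1 := by
      rw [← CStarRing.norm_star_mul_self]; exact h5.trans h6
    nlinarith [norm_nonneg w]
  set z := j * x * j with hz_def
  have hz0 : 0 ≤ z := by
    have := star_left_conjugate_nonneg hx j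
    rwa [hjsa] at this
  have hzsa : IsSelfAdjoint z := IsSelfAdjoint.of_nonneg hz0
  have hzw : z = j * w * r := by
    have h8 : yi * r = j := by rw [hyi_jj, mul_assoc, hjr, mul_one]
    rw [hz_def, hw_def, ← h8]; noncomm_ring
  have hsp : spectrum ℂ z = spectrum ℂ w := by
    have hju : (↑(hru.unit⁻¹) : H →L[ℂ] H) = j := by
      rw [hj_def, ← Ring.inverse_unit hru.unit, hru.unit_spec]
    have h9 : z = ↑(hru.unit⁻¹) * w * ↑(hru.unit⁻¹)⁻¹ := by
      rw [inv_inv, hju, hru.unit_spec, hzw]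
    rw [h9, spectrum.units_conjugate]
  have h10 : (‖z‖₊ : ENNReal) ≤ (‖w‖₊ : ENNReal) := by
    rw [← hzsa.spectralRadius_eq_nnnorm]
    calc spectralRadius ℂ z = spectralRadius ℂ w := by
          unfold spectralRadius; rw [hsp]
    _ ≤ ‖w‖₊ := spectrum.spectralRadius_le_nnnorm w
  have hz1 : z ≤ 1 := by
    refine (CStarAlgebra.norm_le_one_iff_of_nonneg z hz0).mp ?_
    have h11 : ‖z‖₊ ≤ ‖w‖₊ := by exact_mod_cast h10
    calc ‖z‖ ≤ ‖w‖ := h11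
    _ ≤ 1 := hnw
  have hxr : x = r * z * r := by
    rw [hz_def]
    calc x = (r * j) * x * (j * r) := by rw [hrj, hjr, one_mul, mul_one]
    _ = r * (j * x * j) * r := by noncomm_ring
  calc x = star r * z * r := by rw [hrsa.star_eq]; exact hxr
  _ ≤ star r * 1 * r := star_left_conjugate_le_conjugate hz1 r
  _ = y := by rw [hrsa.star_eq, mul_one, hrr]

open scoped ComplexOrder in
private lemma aux_le_of_sq_le_sq {x y : H →L[ℂ] H} (hx : 0 ≤ x) (hy : 0 ≤ y)
    (h : x * x ≤ y * y) : x ≤ y := by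
  apply aux_le_of_forall_eps (IsSelfAdjoint.of_nonneg hx) (IsSelfAdjoint.of_nonneg hy)
  intro ε hε
  have hone : (0 : H →L[ℂ] H) ≤ 1 := by
    rw [ContinuousLinearMap.nonneg_iff_isPositive]; exact ContinuousLinearMap.isPositive_one
  set y' := y + (ε : ℂ) • 1 with hy'_def
  have hy'0 : 0 ≤ y' := add_nonneg hy (aux_smul_nonneg hone hε.le)
  have hy'u : IsUnit y' := by
    have hsp : (-(ε : ℂ)) ∉ spectrum ℂ y := by
      intro hc
      have h0 := spectrum_nonneg_of_nonneg hy hc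
      rw [Complex.le_def] at h0
      simp at h0
      linarith
    have h1 := spectrum.notMem_iff.mp hsp
    have h2 : y' = -(algebraMap ℂ (H →L[ℂ] H) (-(ε : ℂ)) - y) := by
      rw [Algebra.algebraMap_eq_smul_one, hy'_def, neg_smul, neg_sub, sub_neg_eq_add]
    rw [h2]; exact h1.neg
  have hsq : y * y ≤ y' * y' := by
    have hexp : y' * y' = y * y + ((ε : ℂ) • y + ((ε : ℂ) • y + ((ε : ℂ) * (ε : ℂ)) • 1)) := by
      rw [hy'_def]
      simp only [add_mul, mul_add, smul_mul_assoc, mul_smul_comm, one_mul, mul_one, smul_smul]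
      module
    rw [hexp]
    refine le_add_of_nonneg_right ?_
    have hε2 : ((ε : ℂ) * (ε : ℂ)) • (1 : H →L[ℂ] H) = ((ε * ε : ℝ) : ℂ) • 1 := by push_cast; ring_nf
    refine add_nonneg (aux_smul_nonneg hy hε.le) (add_nonneg (aux_smul_nonneg hy hε.le) ?_)
    rw [hε2]; exact aux_smul_nonneg hone (mul_nonneg hε.le hε.le)
  exact aux_le_of_sq_le_sq_unit hx hy'0 hy'u (h.trans hsq)

private lemma aux_douglas {A B : H →L[ℂ] H} {M : ℝ}
    (h : ∀ u : H, ‖adjoint A u‖ ≤ M * ‖adjoint B u‖) :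
    LinearMap.range (A : H →ₗ[ℂ] H) ≤ LinearMap.range (B : H →ₗ[ℂ] H) := by
  rintro _ ⟨x, rfl⟩
  set y := A x with hy_def
  set T : H →ₗ[ℂ] H := (adjoint B : H →L[ℂ] H).toLinearMap with hT_def
  have hbound : ∀ u : H, ‖(inner ℂ y u : ℂ)‖ ≤ (M * ‖x‖) * ‖T u‖ := by
    intro u
    calc ‖(inner ℂ y u : ℂ)‖ = ‖(inner ℂ x (adjoint A u) : ℂ)‖ := by
          rw [hy_def, ← ContinuousLinearMap.adjoint_inner_right]
    _ ≤ ‖x‖ * ‖adjoint A u‖ := norm_inner_le_norm _ _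
    _ ≤ ‖x‖ * (M * ‖adjoint B u‖) := mul_le_mul_of_nonneg_left (h u) (norm_nonneg x)
    _ = (M * ‖x‖) * ‖T u‖ := by rw [hT_def]; simp; ring
  have hker : LinearMap.ker T ≤ LinearMap.ker ((innerSL ℂ y) : H →L[ℂ] ℂ).toLinearMap := by
    intro u hu
    rw [LinearMap.mem_ker] at hu ⊢
    have h0 := hbound u
    rw [hu, norm_zero, mul_zero] at h0
    simpa [innerSL_apply_apply] using norm_le_zero_iff.mp h0
  set g₀ : LinearMap.range T →ₗ[ℂ] ℂ :=
    ((LinearMap.ker T).liftQ ((innerSL ℂ y) : H →L[ℂ] ℂ).toLinearMap hker).comp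
      (T.quotKerEquivRange.symm : LinearMap.range T →ₗ[ℂ] H ⧸ LinearMap.ker T) with hg₀_def
  have key : ∀ u : H, g₀ ⟨T u, LinearMap.mem_range_self T u⟩ = (inner ℂ y u : ℂ) := by
    intro u
    rw [hg₀_def]
    simp only [LinearMap.comp_apply, LinearEquiv.coe_coe]
    rw [LinearMap.quotKerEquivRange_symm_apply_image, Submodule.mkQ_apply,
      Submodule.liftQ_apply]
    simp [innerSL_apply_apply]
  have bound₂ : ∀ v : LinearMap.range T, ‖g₀ v‖ ≤ (M * ‖x‖) * ‖v‖ := by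
    rintro ⟨v, hv⟩
    obtain ⟨u, rfl⟩ := hv
    rw [key u]
    simpa using hbound u
  set g₁ : LinearMap.range T →L[ℂ] ℂ := g₀.mkContinuous (M * ‖x‖) bound₂ with hg₁_def
  obtain ⟨g, hg, -⟩ := exists_extension_norm_eq (𝕜 := ℂ) (LinearMap.range T) g₁
  set z := (InnerProductSpace.toDual ℂ H).symm g with hz_def
  refine ⟨z, ?_⟩
  apply ext_inner_right ℂ
  intro u
  calc (inner ℂ (B z) u : ℂ) = inner ℂ z (adjoint B u) :=
        (ContinuousLinearMap.adjoint_inner_right B z u).symm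
  _ = g (adjoint B u) := by rw [hz_def]; exact InnerProductSpace.toDual_symm_apply
  _ = g₁ ⟨T u, LinearMap.mem_range_self T u⟩ := hg ⟨T u, LinearMap.mem_range_self T u⟩
  _ = (inner ℂ y u : ℂ) := by rw [hg₁_def, LinearMap.mkContinuous_apply]; exact key u

/-- Weak complementability does not depend on the signature operator: if `JW` is `S`-weakly
complementable, then `αJW` is `S`-weakly complementable with respect to the inner ℂ product
`⟨x,y⟩_α = ⟨α⁻¹x, y⟩` induced by the signature operator `J_α = αJ`. -/
theorem stmt_13 (J α W : H →L[ℂ] H)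
    (hJ : IsSelfAdjoint J) (hJ2 : J * J = 1)
    (hα : α.IsPositive) (hαu : IsUnit α) (hαJ : (α * J) * (α * J) = 1)
    (hW : IsSelfAdjoint (J * W))
    (S : Submodule ℂ H) [CompleteSpace S]
    (hwc : IsWeaklyComplementable (J * W) S) :
    (S ⊓ Sᗮ.map (α : H →ₗ[ℂ] H) = ⊥ ∧ S ⊔ Sᗮ.map (α : H →ₗ[ℂ] H) = ⊤) ∧
    ∀ P : H →L[ℂ] H, P * P = P → LinearMap.range (P : H →ₗ[ℂ] H) = S → LinearMap.ker (P : H →ₗ[ℂ] H) = Sᗮ.map (α : H →ₗ[ℂ] H) →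
      ∀ m : H →L[ℂ] H, (Ring.inverse α * m).IsPositive →
        m ^ 4 = α * adjoint (P * (α * J * W) * P) * Ring.inverse α * (P * (α * J * W) * P) →
        LinearMap.range ((P * (α * J * W) * (1 - P) : H →L[ℂ] H) : H →ₗ[ℂ] H) ≤ LinearMap.range (m : H →ₗ[ℂ] H) := by
  have hB : IsSelfAdjoint (J * W) := hW
  have hα0 : (0 : H →L[ℂ] H) ≤ α := (ContinuousLinearMap.nonneg_iff_isPositive α).mpr hα
  set ρ : H →L[ℂ] H := CFC.sqrt α with hρ_def
  have hρ0 : (0 : H →L[ℂ] H) ≤ ρ := CFC.sqrt_nonneg _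
  have hρρ : ρ * ρ = α := CFC.sqrt_mul_sqrt_self α hα0
  have hρsa : IsSelfAdjoint ρ := IsSelfAdjoint.of_nonneg hρ0
  have hρu : IsUnit ρ := aux_isUnit_of_sq (hρρ.symm ▸ hαu)
  set ι : H →L[ℂ] H := Ring.inverse ρ with hι_def
  have hιρ : ι * ρ = 1 := Ring.inverse_mul_cancel ρ hρu
  have hρι : ρ * ι = 1 := Ring.mul_inverse_cancel ρ hρu
  have hιsa : IsSelfAdjoint ι := by
    rw [IsSelfAdjoint]
    have h1 : star ι * ρ = 1 := by
      have h0 := congrArg star hρι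
      rwa [star_mul, hρsa.star_eq, star_one] at h0
    calc star ι = star ι * (ρ * ι) := by rw [hρι, mul_one]
    _ = (star ι * ρ) * ι := by rw [mul_assoc]
    _ = ι := by rw [h1, one_mul]
  have cρι : ∀ X : H →L[ℂ] H, ρ * (ι * X) = X := fun X => by rw [← mul_assoc, hρι, one_mul]
  have cιρ : ∀ X : H →L[ℂ] H, ι * (ρ * X) = X := fun X => by rw [← mul_assoc, hιρ, one_mul]
  have pρι : ∀ v : H, ρ (ι v) = v := fun v => by
    rw [← ContinuousLinearMap.mul_apply, hρι, ContinuousLinearMap.one_apply]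
  have pιρ : ∀ v : H, ι (ρ v) = v := fun v => by
    rw [← ContinuousLinearMap.mul_apply, hιρ, ContinuousLinearMap.one_apply]
  have hαinv : Ring.inverse α = ι * ι := by
    have h1 : α * (ι * ι) = 1 := by
      rw [← hρρ]
      calc ρ * ρ * (ι * ι) = ρ * (ρ * (ι * ι)) := by rw [mul_assoc]
      _ = ρ * ι := by rw [cρι]
      _ = 1 := hρι
    calc Ring.inverse α = Ring.inverse α * (α * (ι * ι)) := by rw [h1, mul_one]
    _ = (Ring.inverse α * α) * (ι * ι) := by rw [mul_assoc]
    _ = ι * ι := by rw [Ring.inverse_mul_cancel α hαu, one_mul]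
  have hρmv : ∀ v w : H, (inner ℂ (ρ v) w : ℂ) = inner ℂ v (ρ w) := fun v w => by
    have h0 := ContinuousLinearMap.adjoint_inner_left ρ w v
    rwa [hρsa.adjoint_eq] at h0
  have hιmv : ∀ v w : H, (inner ℂ (ι v) w : ℂ) = inner ℂ v (ι w) := fun v w => by
    have h0 := ContinuousLinearMap.adjoint_inner_left ι w v
    rwa [hιsa.adjoint_eq] at h0
  have hαapp : ∀ v : H, α v = ρ (ρ v) := fun v => by
    rw [← ContinuousLinearMap.mul_apply, hρρ]
  -- Part 1
  have hSc : IsClosed (S : Set H) :=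
    (completeSpace_coe_iff_isComplete.mp inferInstance).isClosed
  set S₁ : Submodule ℂ H := S.comap (ρ : H →ₗ[ℂ] H) with hS₁_def
  have hS₁c : IsClosed (S₁ : Set H) := by
    have h0 : (S₁ : Set H) = ρ ⁻¹' (S : Set H) := rfl
    rw [h0]; exact hSc.preimage ρ.continuous
  haveI : CompleteSpace S₁ := hS₁c.completeSpace_coe
  have hinf : S ⊓ Sᗮ.map (α : H →ₗ[ℂ] H) = ⊥ := by
    rw [eq_bot_iff]
    rintro x ⟨hxS, hxM⟩
    obtain ⟨t, htO, rfl⟩ := hxM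
    have h1 : (inner ℂ (α t) t : ℂ) = 0 := (S.mem_orthogonal t).mp htO _ hxS
    have h2 : (inner ℂ (ρ t) (ρ t) : ℂ) = 0 := by
      rw [hρmv, ← hαapp]; exact inner_eq_zero_symm.mp h1
    have h3 : ρ t = 0 := inner_self_eq_zero.mp h2
    have h4 : t = 0 := by rw [← pιρ t, h3, map_zero]
    simp [h4]
  have hsum : S ⊔ Sᗮ.map (α : H →ₗ[ℂ] H) = ⊤ := by
    rw [eq_top_iff]
    rintro x -
    set d := ι x with hd_def
    set s := ρ ((S₁.orthogonalProjectionOnto d : S₁) : H) with hs_def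
    have hs : s ∈ S := by
      have h0 := (S₁.orthogonalProjectionOnto d : S₁).2
      rw [Submodule.mem_comap] at h0
      exact h0
    set t := ι (d - ((S₁.orthogonalProjectionOnto d : S₁) : H)) with ht_def
    have ht : t ∈ Sᗮ := by
      rw [Submodule.mem_orthogonal]
      intro w hw
      have hw1 : ι w ∈ S₁ := by
        rw [hS₁_def, Submodule.mem_comap]
        show ρ (ι w) ∈ S
        rw [pρι]; exact hw
      have hperp := Submodule.sub_starProjection_mem_orthogonal (K := S₁) d
      calc (inner ℂ w t : ℂ) = inner ℂ (ι w) (d - ((S₁.orthogonalProjectionOnto d : S₁) : H)) := by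
            rw [ht_def, hιmv]
      _ = 0 := (S₁.mem_orthogonal _).mp hperp _ hw1
    have hx : s + α t = x := by
      rw [hs_def, ht_def, hαapp, pρι, ← map_add, add_sub_cancel, hd_def, pρι]
    exact Submodule.mem_sup.mpr ⟨s, hs, α t, Submodule.mem_map_of_mem ht, hx⟩
  refine ⟨⟨hinf, hsum⟩, ?_⟩
  intro P hP2 hPr hPk m hm0raw hm4
  have hdecomp : ∀ x : H, ∃ s ∈ S, ∃ t ∈ Sᗮ, x = s + α t := by
    intro x
    have hx : x ∈ S ⊔ Sᗮ.map (α : H →ₗ[ℂ] H) := by rw [hsum]; trivial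
    obtain ⟨s, hs, z, hz, hsz⟩ := Submodule.mem_sup.mp hx
    obtain ⟨t, ht, rfl⟩ := hz
    exact ⟨s, hs, t, ht, hsz.symm⟩
  -- p facts
  set p : H →L[ℂ] H := projL S with hp_def
  have hpsa : IsSelfAdjoint p := ContinuousLinearMap.isSelfAdjoint_iff_isSymmetric.mpr S.starProjection_isSymmetric
  have hpmem : ∀ u : H, p u ∈ S := fun u => (S.orthogonalProjectionOnto u).2
  have hpfix : ∀ u ∈ S, p u = u := fun u hu => by
    show (↑(S.orthogonalProjectionOnto u) : H) = u
    exact Submodule.starProjection_eq_self_iff.mpr hu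
  have hp2 : p * p = p := by ext u; exact hpfix _ (hpmem u)
  have hPfix : ∀ u ∈ S, P u = u := by
    intro u hu
    rw [← hPr] at hu
    obtain ⟨w, hw⟩ := hu
    rw [← hw]; change P (P w) = P w; rw [← ContinuousLinearMap.mul_apply, hP2]
  have hpP : p * P = P := by
    ext u
    exact hpfix _ (by rw [← hPr]; exact LinearMap.mem_range_self _ u)
  have hPp : P * p = p := by ext u; exact hPfix _ (hpmem u)
  have hPker : ∀ t ∈ Sᗮ, P (α t) = 0 := by
    intro t ht
    have h0 : α t ∈ LinearMap.ker (P : H →ₗ[ℂ] H) := by rw [hPk]; exact Submodule.mem_map_of_mem ht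
    exact LinearMap.mem_ker.mp h0
  -- adjoint of P moves across ι ι
  have hPadj : ∀ z : H, adjoint P ((ι * ι) z) = (ι * ι) (P z) := by
    intro z
    apply ext_inner_left ℂ
    intro v
    rw [ContinuousLinearMap.adjoint_inner_right]
    obtain ⟨s, hs, t, ht, rfl⟩ := hdecomp v
    obtain ⟨s', hs', t', ht', rfl⟩ := hdecomp z
    have hPv : P (s + α t) = s := by rw [map_add, hPfix s hs, hPker t ht, add_zero]
    have hPz : P (s' + α t') = s' := by rw [map_add, hPfix s' hs', hPker t' ht', add_zero]
    have happ1 : (ι * ι) (s' + α t') = (ι * ι) s' + t' := by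
      rw [map_add]
      congr 1
      show ι (ι (α t')) = t'
      rw [hαapp, pιρ, pιρ]
    rw [hPv, hPz, happ1, inner_add_right, inner_add_left]
    have e1 : (inner ℂ (α t) ((ι * ι) s') : ℂ) = inner ℂ t s' := by
      calc (inner ℂ (α t) ((ι * ι) s') : ℂ) = inner ℂ (ρ (ρ t)) (ι (ι s')) := by rw [hαapp]; rfl
      _ = inner ℂ t (ρ (ρ (ι (ι s')))) := by rw [hρmv, hρmv]
      _ = inner ℂ t s' := by rw [pρι, pρι]
    have e2 : (inner ℂ s t' : ℂ) = 0 := (S.mem_orthogonal t').mp ht' s hs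
    have e3 : (inner ℂ t s' : ℂ) = 0 :=
      inner_eq_zero_symm.mp ((S.mem_orthogonal t).mp ht s' hs')
    rw [e1, e2, e3, add_zero]
  have hPadj_op : adjoint P * (ι * ι) = (ι * ι) * P := by
    ext z; exact hPadj z
  -- Q
  set Q : H →L[ℂ] H := ι * P * ρ with hQ_def
  have hQstar : star Q = Q := by
    have h2 : adjoint P = (ι * ι) * P * (ρ * ρ) := by
      have h3 : (ι * ι) * (ρ * ρ) = 1 := by
        calc (ι * ι) * (ρ * ρ) = ι * (ι * (ρ * ρ)) := by rw [mul_assoc]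
        _ = ι * ρ := by rw [cιρ]
        _ = 1 := hιρ
      calc adjoint P = adjoint P * ((ι * ι) * (ρ * ρ)) := by rw [h3, mul_one]
      _ = (adjoint P * (ι * ι)) * (ρ * ρ) := by simp only [mul_assoc]
      _ = (ι * ι) * P * (ρ * ρ) := by rw [hPadj_op]
    have h1 : star Q = ρ * adjoint P * ι := by
      rw [hQ_def, star_mul, star_mul, hρsa.star_eq, hιsa.star_eq, star_eq_adjoint, mul_assoc]
    rw [h1, h2, hQ_def]
    simp only [mul_assoc, cρι, cιρ]
    rw [hρι, mul_one]
  have hQ2 : Q * Q = Q := by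
    rw [hQ_def]
    simp only [mul_assoc, cρι]
    rw [← mul_assoc P P, hP2]
  have hρQ : ρ * Q = P * ρ := by
    rw [hQ_def]
    simp only [mul_assoc, cρι]
  have hpρQ : p * (ρ * Q) = ρ * Q := by
    rw [hρQ, ← mul_assoc, hpP]
  have hQρp : Q * ρ * p = Q * ρ := by
    have h := congrArg star hpρQ
    rw [star_mul, star_mul, hQstar, hρsa.star_eq, hpsa.star_eq] at h
    exact h
  have hQadj : adjoint Q = Q := by rw [← star_eq_adjoint]; exact hQstar
  have cpp : ∀ X : H →L[ℂ] H, p * (p * X) = p * X := fun X => by rw [← mul_assoc, hp2]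
  have cQρp : ∀ X : H →L[ℂ] H, Q * (ρ * (p * X)) = Q * (ρ * X) := fun X => by
    rw [← mul_assoc, ← mul_assoc, hQρp, mul_assoc]
  have cρQ : ∀ X : H →L[ℂ] H, ρ * (Q * X) = P * (ρ * X) := fun X => by
    rw [← mul_assoc, hρQ, mul_assoc]
  have hQι : Q * ι = ι * P := by
    rw [hQ_def]
    simp only [mul_assoc, hρι, mul_one]
  -- hwc data
  obtain ⟨m₀, ⟨hm₀pos, hm₀4⟩, hm₀r⟩ := hwc
  have hm₀0 : (0 : H →L[ℂ] H) ≤ m₀ := (ContinuousLinearMap.nonneg_iff_isPositive m₀).mpr hm₀pos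
  have hm₀sa : IsSelfAdjoint m₀ := IsSelfAdjoint.of_nonneg hm₀0
  set aop : H →L[ℂ] H := blockA (J * W) S with haop_def
  set bop : H →L[ℂ] H := blockB (J * W) S with hbop_def
  have ha_eq : aop = p * (J * W) * p := rfl
  have hb_eq : bop = p * (J * W) * (1 - p) := rfl
  have hasa : IsSelfAdjoint aop := by
    rw [ha_eq, IsSelfAdjoint, star_mul, star_mul, hpsa.star_eq, hB.star_eq]
    simp only [mul_assoc]
  have hm₀4' : m₀ ^ 4 = aop * aop := by
    rw [hm₀4, ← star_eq_adjoint, hasa.star_eq]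
  have haopmem : ∀ u : H, aop u ∈ S := fun u => by rw [ha_eq]; exact hpmem _
  -- C, mh, ah
  set C : H →L[ℂ] H := Q * ρ * p with hC_def
  have hCstar : star C = p * ρ * Q := by
    rw [hC_def, star_mul, star_mul, hpsa.star_eq, hρsa.star_eq, hQstar]
    simp only [mul_assoc]
  set mh : H →L[ℂ] H := ι * m * ρ with hmh_def
  have hmh0 : (0 : H →L[ℂ] H) ≤ mh := by
    have h1 : mh = star ρ * (Ring.inverse α * m) * ρ := by
      rw [hmh_def, hαinv, hρsa.star_eq]
      simp only [mul_assoc, cρι]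
    rw [h1]
    exact star_left_conjugate_nonneg ((ContinuousLinearMap.nonneg_iff_isPositive _).mpr hm0raw) ρ
  have hmhsa : IsSelfAdjoint mh := IsSelfAdjoint.of_nonneg hmh0
  set Bh : H →L[ℂ] H := ρ * (J * W) * ρ with hBh_def
  set ah : H →L[ℂ] H := Q * Bh * Q with hah_def
  have hah_eq : ah = C * aop * star C := by
    rw [hah_def, hBh_def, ha_eq, hC_def, hCstar]
    simp only [mul_assoc, cpp]
    rw [hpρQ, cQρp]
  have hahsa : IsSelfAdjoint ah := by
    rw [hah_eq]; exact hasa.conjugate C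
  have hahQ : ah = ι * (P * (α * J * W) * P) * ρ := by
    rw [hah_def, hBh_def, hQ_def, ← hρρ]
    simp only [mul_assoc, cρι, cιρ]
  have hsq_sa : ∀ T : H →L[ℂ] H, IsSelfAdjoint T → IsSelfAdjoint (T * T) := fun T hT => by
    rw [IsSelfAdjoint, star_mul, hT.star_eq]
  have hmh4 : (mh * mh) * (mh * mh) = ah * ah := by
    have h1 : (mh * mh) * (mh * mh) = ι * (m * (m * (m * m))) * ρ := by
      rw [hmh_def]
      simp only [mul_assoc, cρι, cιρ]
    have h2 : m ^ 4 = m * (m * (m * m)) := by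
      rw [pow_succ, pow_succ, pow_succ, pow_one]
      simp only [mul_assoc]
    have h3 : ah * ah = (ρ * star (P * (α * J * W) * P) * ι) * (ι * (P * (α * J * W) * P) * ρ) := by
      nth_rewrite 1 [← hahsa.star_eq]
      rw [hahQ, star_mul, star_mul, hρsa.star_eq, hιsa.star_eq]
      simp only [mul_assoc]
    rw [h1, ← h2, hm4, h3, hαinv, ← star_eq_adjoint, ← hρρ]
    simp only [mul_assoc, cρι, cιρ]
  -- positivity/forms helpers
  have hle_of_forms : ∀ X Y : H →L[ℂ] H, IsSelfAdjoint X → IsSelfAdjoint Y →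
      (∀ u : H, RCLike.re (inner ℂ (X u) u : ℂ) ≤ RCLike.re (inner ℂ (Y u) u : ℂ)) → X ≤ Y := by
    intro X Y hX hY hf
    rw [ContinuousLinearMap.le_def, ContinuousLinearMap.isPositive_def']
    refine ⟨hY.sub hX, fun u => ?_⟩
    show (0:ℝ) ≤ RCLike.re (inner ℂ ((Y - X) u) u : ℂ)
    rw [ContinuousLinearMap.sub_apply, inner_sub_left, map_sub]
    exact sub_nonneg.mpr (hf u)
  have hform_sq : ∀ T : H →L[ℂ] H, IsSelfAdjoint T → ∀ u : H,
      RCLike.re (inner ℂ ((T * T) u) u : ℂ) = ‖T u‖ ^ 2 := by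
    intro T hT u
    rw [ContinuousLinearMap.mul_apply]
    have h0 := ContinuousLinearMap.adjoint_inner_left T u (T u)
    rw [hT.adjoint_eq] at h0
    rw [h0]
    exact inner_self_eq_norm_sq (𝕜 := ℂ) (T u)
  have hform_conj : ∀ D F : H →L[ℂ] H, IsSelfAdjoint D → ∀ u : H,
      RCLike.re (inner ℂ ((star F * (D * D) * F) u) u : ℂ) = ‖D (F u)‖ ^ 2 := by
    intro D F hD u
    have h1 : (star F * (D * D) * F) u = star F ((D * D) (F u)) := rfl
    rw [h1, star_eq_adjoint]
    rw [ContinuousLinearMap.adjoint_inner_left]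
    rw [ContinuousLinearMap.mul_apply]
    have h0 := ContinuousLinearMap.adjoint_inner_left D (F u) (D (F u))
    rw [hD.adjoint_eq] at h0
    rw [h0]
    exact inner_self_eq_norm_sq (𝕜 := ℂ) _
  have hre_smul : ∀ (μ : ℝ) (T : H →L[ℂ] H) (u : H),
      RCLike.re (inner ℂ (((μ : ℂ) • T) u) u : ℂ) = μ * RCLike.re (inner ℂ (T u) u : ℂ) := by
    intro μ T u
    rw [ContinuousLinearMap.smul_apply, inner_smul_left]
    simp [Complex.conj_ofReal]
  have hsmul_sa : ∀ (μ : ℝ) (T : H →L[ℂ] H), IsSelfAdjoint T → IsSelfAdjoint ((μ : ℂ) • T) := by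
    intro μ T hT
    rw [IsSelfAdjoint, star_smul, hT.star_eq]
    simp [Complex.star_def, Complex.conj_ofReal]
  -- key pointwise inequality I1
  set creal : ℝ := 1 + ‖ι‖ with hcreal_def
  have hcreal0 : 0 ≤ creal := by positivity
  have hI1 : ∀ u : H, ‖aop u‖ ≤ creal * ‖(C * aop) u‖ := by
    intro u
    have hsS : aop u ∈ S := haopmem u
    have h1 : (C * aop) u = Q (ρ (aop u)) := by
      have e0 : (C * aop) u = C (aop u) := rfl
      rw [e0, hC_def]
      show (Q * ρ * p) (aop u) = Q (ρ (aop u))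
      have e1 : (Q * ρ * p) (aop u) = Q (ρ (p (aop u))) := rfl
      rw [e1, hpfix _ hsS]
    have h2 : Q (ι (aop u)) = ι (aop u) := by
      rw [hQ_def]
      have e1 : (ι * P * ρ) (ι (aop u)) = ι (P (ρ (ι (aop u)))) := rfl
      rw [e1, pρι, hPfix _ hsS]
    have h3 : (inner ℂ ((C * aop) u) (ι (aop u)) : ℂ) = inner ℂ (aop u) (aop u) := by
      rw [h1]
      have h0 := ContinuousLinearMap.adjoint_inner_left Q (ι (aop u)) (ρ (aop u))
      rw [hQadj] at h0
      calc (inner ℂ (Q (ρ (aop u))) (ι (aop u)) : ℂ) = inner ℂ (ρ (aop u)) (Q (ι (aop u))) := h0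
      _ = inner ℂ (ρ (aop u)) (ι (aop u)) := by rw [h2]
      _ = inner ℂ (aop u) (ρ (ι (aop u))) := hρmv _ _
      _ = inner ℂ (aop u) (aop u) := by rw [pρι]
    have h4 : ‖aop u‖ ^ 2 ≤ ‖(C * aop) u‖ * (‖ι‖ * ‖aop u‖) := by
      calc ‖aop u‖ ^ 2 = RCLike.re (inner ℂ (aop u) (aop u) : ℂ) :=
            (inner_self_eq_norm_sq (𝕜 := ℂ) (aop u)).symm
      _ = RCLike.re (inner ℂ ((C * aop) u) (ι (aop u)) : ℂ) := by rw [h3]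
      _ ≤ ‖(inner ℂ ((C * aop) u) (ι (aop u)) : ℂ)‖ := RCLike.re_le_norm _
      _ ≤ ‖(C * aop) u‖ * ‖ι (aop u)‖ := norm_inner_le_norm _ _
      _ ≤ ‖(C * aop) u‖ * (‖ι‖ * ‖aop u‖) :=
            mul_le_mul_of_nonneg_left (ι.le_opNorm (aop u)) (norm_nonneg _)
    by_cases hz : ‖aop u‖ = 0
    · rw [hz]; positivity
    · have hzpos : 0 < ‖aop u‖ := lt_of_le_of_ne (norm_nonneg _) (Ne.symm hz)
      nlinarith [norm_nonneg ((C * aop) u), norm_nonneg ι, norm_nonneg (aop u),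
        mul_nonneg (norm_nonneg ((C * aop) u)) (norm_nonneg (aop u))]
  set Kreal : ℝ := 1 + ‖C‖ with hKreal_def
  have hKreal0 : 0 ≤ Kreal := by positivity
  set μ : ℝ := Kreal * creal with hμ_def
  have hμ0 : 0 ≤ μ := mul_nonneg hKreal0 hcreal0
  -- X := C m₀² C*
  set X : H →L[ℂ] H := C * (m₀ * m₀) * star C with hX_def
  have hm₀sq0 : (0 : H →L[ℂ] H) ≤ m₀ * m₀ := by
    have h0 := star_mul_self_nonneg m₀
    rwa [hm₀sa.star_eq] at h0
  have hX0 : (0 : H →L[ℂ] H) ≤ X := by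
    rw [hX_def]; exact star_right_conjugate_nonneg hm₀sq0 C
  have hXsa : IsSelfAdjoint X := IsSelfAdjoint.of_nonneg hX0
  have hmhsq0 : (0 : H →L[ℂ] H) ≤ mh * mh := by
    have h0 := star_mul_self_nonneg mh
    rwa [hmhsa.star_eq] at h0
  -- pointwise: norm of m₀² equals norm of aop
  have hm44 : (m₀ * m₀) * (m₀ * m₀) = aop * aop := by
    rw [← hm₀4', pow_succ, pow_succ, pow_succ, pow_one]
    simp only [mul_assoc]
  have hm2 : ∀ v : H, ‖(m₀ * m₀) v‖ ^ 2 = ‖aop v‖ ^ 2 := by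
    intro v
    calc ‖(m₀ * m₀) v‖ ^ 2
        = RCLike.re (inner ℂ (((m₀ * m₀) * (m₀ * m₀)) v) v : ℂ) :=
          (hform_sq _ (hsq_sa m₀ hm₀sa) v).symm
    _ = RCLike.re (inner ℂ ((aop * aop) v) v : ℂ) := by rw [hm44]
    _ = ‖aop v‖ ^ 2 := hform_sq _ hasa v
  -- X * X ≤ μ² • (ah * ah)
  have hXX : X * X ≤ ((μ ^ 2 : ℝ) : ℂ) • ((mh * mh) * (mh * mh)) := by
    apply hle_of_forms _ _ (hsq_sa X hXsa)
      (hsmul_sa _ _ (hsq_sa _ (hsq_sa mh hmhsa)))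
    intro u
    rw [hre_smul, hform_sq X hXsa u, hmh4, hform_sq ah hahsa u]
    have e1 : X u = C ((m₀ * m₀) (star C u)) := rfl
    have e2 : ‖X u‖ ≤ Kreal * ‖(m₀ * m₀) (star C u)‖ := by
      rw [e1]
      calc ‖C ((m₀ * m₀) (star C u))‖ ≤ ‖C‖ * ‖(m₀ * m₀) (star C u)‖ := C.le_opNorm _
      _ ≤ Kreal * ‖(m₀ * m₀) (star C u)‖ := by
            apply mul_le_mul_of_nonneg_right _ (norm_nonneg _)
            rw [hKreal_def]; linarith
    have e3 : ‖(m₀ * m₀) (star C u)‖ ^ 2 = ‖aop (star C u)‖ ^ 2 := hm2 _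
    have e4 : ‖aop (star C u)‖ ≤ creal * ‖ah u‖ := by
      have h0 := hI1 (star C u)
      have h1 : (C * aop) (star C u) = ah u := by rw [hah_eq]; rfl
      rwa [h1] at h0
    have e5 : 0 ≤ ‖ah u‖ := norm_nonneg _
    have e6 : 0 ≤ ‖aop (star C u)‖ := norm_nonneg _
    have e7 : 0 ≤ ‖(m₀ * m₀) (star C u)‖ := norm_nonneg _
    have e8 : 0 ≤ ‖X u‖ := norm_nonneg _
    have e9 : ‖X u‖ ^ 2 ≤ Kreal ^ 2 * ‖(m₀ * m₀) (star C u)‖ ^ 2 := by nlinarith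
    have e10 : ‖aop (star C u)‖ ^ 2 ≤ creal ^ 2 * ‖ah u‖ ^ 2 := by
      nlinarith [mul_self_le_mul_self e6 e4]
    have e11 : ‖X u‖ ^ 2 ≤ Kreal ^ 2 * (creal ^ 2 * ‖ah u‖ ^ 2) := by
      calc ‖X u‖ ^ 2 ≤ Kreal ^ 2 * ‖(m₀ * m₀) (star C u)‖ ^ 2 := e9
      _ = Kreal ^ 2 * ‖aop (star C u)‖ ^ 2 := by rw [e3]
      _ ≤ Kreal ^ 2 * (creal ^ 2 * ‖ah u‖ ^ 2) := mul_le_mul_of_nonneg_left e10 (sq_nonneg Kreal)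
    rw [hμ_def]
    calc ‖X u‖ ^ 2 ≤ Kreal ^ 2 * (creal ^ 2 * ‖ah u‖ ^ 2) := e11
    _ = (Kreal * creal) ^ 2 * ‖ah u‖ ^ 2 := by ring
  -- X ≤ μ • mh²
  have hXle : X ≤ ((μ : ℝ) : ℂ) • (mh * mh) := by
    apply aux_le_of_sq_le_sq hX0 (aux_smul_nonneg hmhsq0 hμ0)
    calc X * X ≤ ((μ ^ 2 : ℝ) : ℂ) • ((mh * mh) * (mh * mh)) := hXX
    _ = (((μ : ℝ) : ℂ) • (mh * mh)) * (((μ : ℝ) : ℂ) • (mh * mh)) := by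
          rw [smul_mul_smul_comm]
          congr 1
          push_cast
          ring
  -- Douglas 1 : range (C * aop) ≤ range (mh * mh)
  have hD1 : LinearMap.range ((C * aop : H →L[ℂ] H) : H →ₗ[ℂ] H) ≤ LinearMap.range ((mh * mh : H →L[ℂ] H) : H →ₗ[ℂ] H) := by
    apply aux_douglas (M := creal)
    intro u
    have h1 : adjoint (C * aop) = aop * star C := by
      rw [← star_eq_adjoint, star_mul, hasa.star_eq]
    have h7 : adjoint (mh * mh) = mh * mh := by
      rw [← star_eq_adjoint]; exact hsq_sa mh hmhsa
    rw [h1, h7]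
    have h2 : (aop * star C) u = aop (star C u) := rfl
    have h4 : (C * aop) (star C u) = ah u := by rw [hah_eq]; rfl
    have h5 : ‖ah u‖ = ‖(mh * mh) u‖ := by
      have e1 : ‖ah u‖ ^ 2 = ‖(mh * mh) u‖ ^ 2 := by
        rw [← hform_sq ah hahsa u, ← hform_sq (mh * mh) (hsq_sa mh hmhsa) u, hmh4]
      have h6 := congrArg Real.sqrt e1
      rwa [Real.sqrt_sq (norm_nonneg _), Real.sqrt_sq (norm_nonneg _)] at h6
    calc ‖(aop * star C) u‖ = ‖aop (star C u)‖ := by rw [h2]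
    _ ≤ creal * ‖(C * aop) (star C u)‖ := hI1 _
    _ = creal * ‖ah u‖ := by rw [h4]
    _ = creal * ‖(mh * mh) u‖ := by rw [h5]
  have hD1' : LinearMap.range ((C * aop : H →L[ℂ] H) : H →ₗ[ℂ] H) ≤ LinearMap.range (mh : H →ₗ[ℂ] H) := by
    refine hD1.trans ?_
    rintro _ ⟨v, rfl⟩
    exact ⟨mh v, rfl⟩
  -- Douglas 2 : range (C * m₀) ≤ range mh
  have hD2 : LinearMap.range ((C * m₀ : H →L[ℂ] H) : H →ₗ[ℂ] H) ≤ LinearMap.range (mh : H →ₗ[ℂ] H) := by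
    apply aux_douglas (M := Real.sqrt μ)
    intro u
    have h1 : adjoint (C * m₀) = m₀ * star C := by
      rw [← star_eq_adjoint, star_mul, hm₀sa.star_eq]
    have h7 : adjoint mh = mh := by rw [← star_eq_adjoint]; exact hmhsa
    rw [h1, h7]
    have h2 : (m₀ * star C) u = m₀ (star C u) := rfl
    have h3 : ‖m₀ (star C u)‖ ^ 2 ≤ μ * ‖mh u‖ ^ 2 := by
      have e0 := hform_conj m₀ (star C) hm₀sa u
      rw [star_star] at e0
      have e1 : RCLike.re (inner ℂ (X u) u : ℂ) = ‖m₀ (star C u)‖ ^ 2 := by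
        rw [hX_def]; exact e0
      have e2 := (ContinuousLinearMap.le_def _ _ |>.mp hXle).2 u
      have e3 : (0:ℝ) ≤ RCLike.re (inner ℂ (((((μ : ℝ) : ℂ) • (mh * mh)) - X) u) u : ℂ) := e2
      rw [ContinuousLinearMap.sub_apply, inner_sub_left, map_sub] at e3
      rw [hre_smul, hform_sq mh hmhsa u] at e3
      rw [← e1]
      linarith
    have h4 : ‖m₀ (star C u)‖ ≤ Real.sqrt μ * ‖mh u‖ := by
      have e1 : ‖m₀ (star C u)‖ = Real.sqrt (‖m₀ (star C u)‖ ^ 2) :=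
        (Real.sqrt_sq (norm_nonneg _)).symm
      rw [e1]
      calc Real.sqrt (‖m₀ (star C u)‖ ^ 2) ≤ Real.sqrt (μ * ‖mh u‖ ^ 2) := Real.sqrt_le_sqrt h3
      _ = Real.sqrt μ * ‖mh u‖ := by
            rw [Real.sqrt_mul hμ0, Real.sqrt_sq (norm_nonneg _)]
    rw [h2]; exact h4
  -- final equality
  have hfin : ρ * (Q * Bh * (1 - Q)) * ι = P * (α * J * W) * (1 - P) := by
    have e1 : ρ * (Q * Bh * (1 - Q)) * ι = ρ * (Q * Bh) * ι - ρ * (Q * Bh * Q) * ι := by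
      noncomm_ring
    have e2 : P * (α * J * W) * (1 - P) = P * (α * J * W) - P * (α * J * W) * P := by
      noncomm_ring
    rw [e1, e2]
    congr 1
    · rw [hBh_def, ← hρρ]
      simp only [mul_assoc, hρι, mul_one, cρQ, cρι]
    · rw [hBh_def, ← hρρ]
      simp only [mul_assoc, hQι, cρQ, cρι, hρι, mul_one]
  -- splitting of the off-diagonal block
  have hop : Q * Bh * (1 - Q) = (C * aop) * (ρ * (1 - Q)) + (C * bop) * (ρ * (1 - Q)) := by
    have h1 : (C * aop) + (C * bop) = Q * (ρ * (J * W)) := by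
      rw [hC_def, ha_eq, hb_eq]
      have h2 : (p * (J * W) * p) + (p * (J * W) * (1 - p)) = p * (J * W) := by noncomm_ring
      calc (Q * ρ * p) * (p * (J * W) * p) + (Q * ρ * p) * (p * (J * W) * (1 - p))
          = (Q * ρ * p) * ((p * (J * W) * p) + (p * (J * W) * (1 - p))) := by rw [mul_add]
      _ = (Q * ρ * p) * (p * (J * W)) := by rw [h2]
      _ = Q * (ρ * (J * W)) := by
            simp only [mul_assoc, cpp]
            rw [cQρp]
    have h3 : Q * Bh * (1 - Q) = (Q * (ρ * (J * W))) * (ρ * (1 - Q)) := by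
      rw [hBh_def]; simp only [mul_assoc]
    rw [h3, ← h1, add_mul]
  -- conclusion
  rintro _ ⟨x, rfl⟩
  have hgoal_eq : (P * (α * J * W) * (1 - P)) x = ρ ((Q * Bh * (1 - Q)) (ι x)) := by
    rw [← hfin]; rfl
  set w : H := (ρ * (1 - Q)) (ι x) with hw_def
  have hsplit : (Q * Bh * (1 - Q)) (ι x) = (C * aop) w + C (bop w) := by
    rw [hop]; rfl
  have hw1 : (C * aop) w ∈ LinearMap.range (mh : H →ₗ[ℂ] H) := hD1' ⟨w, rfl⟩
  have hw2 : C (bop w) ∈ LinearMap.range (mh : H →ₗ[ℂ] H) := by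
    have hbw : bop w ∈ LinearMap.range (m₀ : H →ₗ[ℂ] H) := hm₀r ⟨w, rfl⟩
    obtain ⟨t, ht⟩ := hbw
    have h0 : C (bop w) = (C * m₀) t := by rw [← ht]; rfl
    rw [h0]; exact hD2 ⟨t, rfl⟩
  obtain ⟨v1, hv1⟩ := hw1
  obtain ⟨v2, hv2⟩ := hw2
  refine ⟨ρ (v1 + v2), ?_⟩
  have hmρ : ∀ v : H, m (ρ v) = ρ (mh v) := by
    intro v
    have h0 : ρ * mh = m * ρ := by
      rw [hmh_def]; simp only [mul_assoc, cρι]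
    calc m (ρ v) = (m * ρ) v := rfl
    _ = (ρ * mh) v := by rw [h0]
    _ = ρ (mh v) := rfl
  calc m (ρ (v1 + v2)) = ρ (mh (v1 + v2)) := hmρ _
  _ = ρ (mh v1 + mh v2) := by rw [map_add]
  _ = ρ ((C * aop) w + C (bop w)) := by rw [← hv1, ← hv2]; rfl
  _ = ρ ((Q * Bh * (1 - Q)) (ι x)) := by rw [← hsplit]
  _ = (P * (α * J * W) * (1 - P)) x := hgoal_eq.symm
end
end
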